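/- arXiv:math/0112049 — 3 statements merged into one kernel-verified Lean document; each statement's English description precedes it below -/
import Mathlib

section
/- Let (Λ,d) be a k-graph satisfying the standing assumption (★). The bracket map (x,y) ↦ [x,y], defined on {(x,y) ∈ Λ^Δ × Λ^Δ : x(0) = y(0)}, is continuous (with respect to the product of the cylinder-set topologies) and satisfies: [x,x] = x for all x; [[x,y],z] = [x,z] whenever x(0) = y(0) = z(0); [x,[y,z]] = [x,z] whenever x(0) = y(0) = z(0); and for n ∈ ℕ^k, σ^n[x,y] = [σ^n x, σ^n y] whenever x(0) = y(0) and x(a,b) = y(a,b) for all 0 ≤ a ≤ b ≤ n, and σ^{−n}[x,y] = [σ^{−n} x, σ^{−n} y] whenever x(0) = y(0) and x(a,b) = y(a,b) for all −n ≤ a ≤ b ≤ 0. -/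
open scoped Classical
open TopologicalSpace MeasureTheory

/-- A `k`-graph: a countable small category with a degree functor to `ℕ^k`
satisfying the unique factorisation property.  Objects are identified with
the degree-zero morphisms. -/
structure KGraph (k : ℕ) where
  Mor : Type
  countable : Countable Mor
  src : Mor → Mor
  rng : Mor → Mor
  deg : Mor → Fin k → ℕ
  comp : (lam mu : Mor) → src lam = rng mu → Mor
  deg_src : ∀ lam, deg (src lam) = 0
  deg_rng : ∀ lam, deg (rng lam) = 0
  src_obj : ∀ v, deg v = 0 → src v = v
  rng_obj : ∀ v, deg v = 0 → rng v = v
  src_comp : ∀ lam mu h, src (comp lam mu h) = src mu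
  rng_comp : ∀ lam mu h, rng (comp lam mu h) = rng lam
  deg_comp : ∀ lam mu h, deg (comp lam mu h) = deg lam + deg mu
  id_comp : ∀ lam (h : src (rng lam) = rng lam), comp (rng lam) lam h = lam
  comp_id : ∀ lam (h : src lam = rng (src lam)), comp lam (src lam) h = lam
  assoc : ∀ l m n (h1 : src l = rng m) (h2 : src m = rng n)
      (h3 : src (comp l m h1) = rng n) (h4 : src l = rng (comp m n h2)),
      comp (comp l m h1) n h3 = comp l (comp m n h2) h4
  factor : ∀ lam (n1 n2 : Fin k → ℕ), deg lam = n1 + n2 →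
      ∃! p : Mor × Mor, deg p.1 = n1 ∧ deg p.2 = n2 ∧
        ∃ h : src p.1 = rng p.2, comp p.1 p.2 h = lam

namespace KGraph

variable {k : ℕ}

/-- The vertices (objects) of a `k`-graph are the degree-zero morphisms. -/
def IsVertex (Λ : KGraph k) (v : Λ.Mor) : Prop := Λ.deg v = 0

/-- Standing assumption (★): for each `p ∈ ℕ^k` the restrictions of `r` and `s`
to `Λ^p` are surjective (onto the vertices) and finite-to-one. -/
def Star (Λ : KGraph k) : Prop :=
  ∀ p : Fin k → ℕ,
    (∀ v, Λ.IsVertex v →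
      (∃ lam, Λ.deg lam = p ∧ Λ.rng lam = v) ∧
      (∃ lam, Λ.deg lam = p ∧ Λ.src lam = v)) ∧
    (∀ v, Λ.IsVertex v →
      {lam | Λ.deg lam = p ∧ Λ.rng lam = v}.Finite ∧
      {lam | Λ.deg lam = p ∧ Λ.src lam = v}.Finite)

/-- Irreducibility (strong connectedness) of a `k`-graph. -/
def Irreducible (Λ : KGraph k) : Prop :=
  ∀ u v, Λ.IsVertex u → Λ.IsVertex v →
    ∃ lam, Λ.deg lam ≠ 0 ∧ Λ.rng lam = u ∧ Λ.src lam = v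

/-- Primitivity of a `k`-graph. -/
def Primitive (Λ : KGraph k) : Prop :=
  ∃ p : Fin k → ℕ, p ≠ 0 ∧ ∀ u v, Λ.IsVertex u → Λ.IsVertex v →
    ∃ lam, Λ.deg lam = p ∧ Λ.rng lam = u ∧ Λ.src lam = v

/-- The degree of a morphism, viewed in `ℤ^k`. -/
def degZ (Λ : KGraph k) (lam : Λ.Mor) : Fin k → ℤ := fun i => (Λ.deg lam i : ℤ)

/-- The number of morphisms of degree `p` with range `u` and source `v`. -/
noncomputable def count (Λ : KGraph k) (p : Fin k → ℕ) (u v : Λ.Mor) : ℕ :=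
  Nat.card {lam : Λ.Mor // Λ.deg lam = p ∧ Λ.rng lam = u ∧ Λ.src lam = v}

end KGraph

/-- A two-sided infinite path in a `k`-graph: a degree-preserving functor from
the `k`-graph `Δ = {(m,n) ∈ ℤ^k × ℤ^k : m ≤ n}` to `Λ`. -/
structure TwoSidedPath {k : ℕ} (Λ : KGraph k) where
  toFun : ∀ m n : Fin k → ℤ, m ≤ n → Λ.Mor
  deg_eq : ∀ m n (h : m ≤ n) (i : Fin k), (Λ.deg (toFun m n h) i : ℤ) = n i - m i
  src_eq : ∀ m n (h : m ≤ n), Λ.src (toFun m n h) = toFun n n le_rfl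
  rng_eq : ∀ m n (h : m ≤ n), Λ.rng (toFun m n h) = toFun m m le_rfl
  comp_eq : ∀ l m n (h1 : l ≤ m) (h2 : m ≤ n),
      Λ.comp (toFun l m h1) (toFun m n h2)
        ((src_eq l m h1).trans (rng_eq m n h2).symm) = toFun l n (h1.trans h2)

/-- A one-sided infinite path in a `k`-graph: a degree-preserving functor from
the `k`-graph `Ω = {(m,n) ∈ ℕ^k × ℕ^k : m ≤ n}` to `Λ`. -/
structure OneSidedPath {k : ℕ} (Λ : KGraph k) where
  toFun : ∀ m n : Fin k → ℕ, m ≤ n → Λ.Mor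
  deg_eq : ∀ m n (h : m ≤ n) (i : Fin k), Λ.deg (toFun m n h) i = n i - m i
  src_eq : ∀ m n (h : m ≤ n), Λ.src (toFun m n h) = toFun n n le_rfl
  rng_eq : ∀ m n (h : m ≤ n), Λ.rng (toFun m n h) = toFun m m le_rfl
  comp_eq : ∀ l m n (h1 : l ≤ m) (h2 : m ≤ n),
      Λ.comp (toFun l m h1) (toFun m n h2)
        ((src_eq l m h1).trans (rng_eq m n h2).symm) = toFun l n (h1.trans h2)

namespace TwoSidedPath

variable {k : ℕ} {Λ : KGraph k}

theorem toFun_congr (x : TwoSidedPath Λ) {m n m' n' : Fin k → ℤ}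
    (hm : m = m') (hn : n = n') (h : m ≤ n) (h' : m' ≤ n') :
    x.toFun m n h = x.toFun m' n' h' := by subst hm; subst hn; rfl

/-- The vertex `x(0)` of a two-sided path. -/
def obj0 (x : TwoSidedPath Λ) : Λ.Mor := x.toFun 0 0 le_rfl

end TwoSidedPath

theorem le_add_degZ {k : ℕ} (Λ : KGraph k) (n : Fin k → ℤ) (lam : Λ.Mor) :
    n ≤ n + Λ.degZ lam :=
  Pi.le_def.mpr fun i => by
    show n i ≤ n i + (Λ.deg lam i : ℤ); omega

/-- The cylinder set `Z(λ, n) = {x ∈ Λ^Δ : x(n, n + d(λ)) = λ}`. -/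
def ZCyl {k : ℕ} (Λ : KGraph k) (lam : Λ.Mor) (n : Fin k → ℤ) :
    Set (TwoSidedPath Λ) :=
  {x | x.toFun n (n + Λ.degZ lam) (le_add_degZ Λ n lam) = lam}

/-- The topology on `Λ^Δ` generated by the cylinder sets. -/
instance {k : ℕ} (Λ : KGraph k) : TopologicalSpace (TwoSidedPath Λ) :=
  TopologicalSpace.generateFrom {S | ∃ lam n, S = ZCyl Λ lam n}

noncomputable instance {k : ℕ} (Λ : KGraph k) : MeasurableSpace (TwoSidedPath Λ) :=
  borel _

/-- The one-sided cylinder set `Z(λ) = {x ∈ Λ^Ω : x(0, d(λ)) = λ}`. -/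
def OCyl {k : ℕ} (Λ : KGraph k) (lam : Λ.Mor) : Set (OneSidedPath Λ) :=
  {x | x.toFun 0 (Λ.deg lam) (Pi.le_def.mpr fun _ => Nat.zero_le _) = lam}

/-- The topology on `Λ^Ω` generated by the cylinder sets. -/
instance {k : ℕ} (Λ : KGraph k) : TopologicalSpace (OneSidedPath Λ) :=
  TopologicalSpace.generateFrom {S | ∃ lam, S = OCyl Λ lam}

/-- The shift `σ^n` on the two-sided path space, for `n ∈ ℤ^k`. -/
def TwoSidedPath.shift {k : ℕ} {Λ : KGraph k} (n : Fin k → ℤ)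
    (x : TwoSidedPath Λ) : TwoSidedPath Λ where
  toFun l m h := x.toFun (l + n) (m + n) (add_le_add_left h n)
  deg_eq l m h i := by
    show (Λ.deg (x.toFun (l + n) (m + n) (add_le_add_left h n)) i : ℤ) = m i - l i
    have h' := x.deg_eq (l + n) (m + n) (add_le_add_left h n) i
    simp only [Pi.add_apply] at h'
    omega
  src_eq l m h := x.src_eq (l + n) (m + n) (add_le_add_left h n)
  rng_eq l m h := x.rng_eq (l + n) (m + n) (add_le_add_left h n)
  comp_eq l m m' h1 h2 :=
    x.comp_eq (l + n) (m + n) (m' + n) (add_le_add_left h1 n) (add_le_add_left h2 n)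

/-- The shift `σ^p` on the one-sided path space, for `p ∈ ℕ^k`. -/
def OneSidedPath.shift {k : ℕ} {Λ : KGraph k} (p : Fin k → ℕ)
    (x : OneSidedPath Λ) : OneSidedPath Λ where
  toFun l m h := x.toFun (l + p) (m + p) (add_le_add_left h p)
  deg_eq l m h i := by
    show Λ.deg (x.toFun (l + p) (m + p) (add_le_add_left h p)) i = m i - l i
    have h' := x.deg_eq (l + p) (m + p) (add_le_add_left h p) i
    simp only [Pi.add_apply] at h'
    omega
  src_eq l m h := x.src_eq (l + p) (m + p) (add_le_add_left h p)
  rng_eq l m h := x.rng_eq (l + p) (m + p) (add_le_add_left h p)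
  comp_eq l m m' h1 h2 :=
    x.comp_eq (l + p) (m + p) (m' + p) (add_le_add_left h1 p) (add_le_add_left h2 p)

/-- The vector `(j, …, j) ∈ ℤ^k`, i.e. `j·e` where `e = (1,…,1)`. -/
def jvecZ (k : ℕ) (j : ℕ) : Fin k → ℤ := fun _ => (j : ℤ)

theorem neg_jvecZ_le (k j : ℕ) : -(jvecZ k j) ≤ jvecZ k j :=
  Pi.le_def.mpr fun _ => by show -((j : ℤ)) ≤ (j : ℤ); omega

/-- Coercion `ℕ^k → ℤ^k`. -/
def coeZ {k : ℕ} (p : Fin k → ℕ) : Fin k → ℤ := fun i => (p i : ℤ)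

theorem coeZ_le_coeZ {k : ℕ} {m n : Fin k → ℕ} (h : m ≤ n) : coeZ m ≤ coeZ n :=
  Pi.le_def.mpr fun i => by
    show ((m i : ℤ)) ≤ (n i : ℤ)
    exact_mod_cast Pi.le_def.mp h i

theorem neg_coeZ_le {k : ℕ} (m : Fin k → ℕ) : -(coeZ m) ≤ coeZ m :=
  Pi.le_def.mpr fun i => by show -((m i : ℤ)) ≤ (m i : ℤ); omega

/-- The quantity `h(x,y) ∈ ℕ∞`:  `0` if `x(0) ≠ y(0)`, and otherwise
`1 + sup { j : x(-je, je) = y(-je, je) }`. -/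
noncomputable def hdist {k : ℕ} {Λ : KGraph k} (x y : TwoSidedPath Λ) : ℕ∞ :=
  if x.obj0 = y.obj0 then
    1 + sSup {c : ℕ∞ | ∃ j : ℕ, c = (j : ℕ∞) ∧
        x.toFun (-(jvecZ k j)) (jvecZ k j) (neg_jvecZ_le k j) =
        y.toFun (-(jvecZ k j)) (jvecZ k j) (neg_jvecZ_le k j)}
  else 0

/-- The metric `ρ(x,y) = r^{h(x,y)}`, with `r^∞ = 0`. -/
noncomputable def rho {k : ℕ} {Λ : KGraph k} (r : ℝ) (x y : TwoSidedPath Λ) : ℝ :=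
  if hdist x y = ⊤ then 0 else r ^ (hdist x y).toNat

/-- The local contracting set `E_x`. -/
def Ex {k : ℕ} {Λ : KGraph k} (x : TwoSidedPath Λ) : Set (TwoSidedPath Λ) :=
  {y | ∀ m n (h : m ≤ n), 0 ≤ m → y.toFun m n h = x.toFun m n h}

/-- The local expanding set `F_x`. -/
def Fx {k : ℕ} {Λ : KGraph k} (x : TwoSidedPath Λ) : Set (TwoSidedPath Λ) :=
  {y | ∀ m n (h : m ≤ n), n ≤ 0 → y.toFun m n h = x.toFun m n h}

/-- The restriction map `π : Λ^Δ → Λ^Ω`. -/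
def TwoSidedPath.restrict {k : ℕ} {Λ : KGraph k} (x : TwoSidedPath Λ) :
    OneSidedPath Λ where
  toFun m n h := x.toFun (coeZ m) (coeZ n) (coeZ_le_coeZ h)
  deg_eq m n h i := by
    show Λ.deg (x.toFun (coeZ m) (coeZ n) (coeZ_le_coeZ h)) i = n i - m i
    have h' := x.deg_eq (coeZ m) (coeZ n) (coeZ_le_coeZ h) i
    simp only [coeZ] at h'
    omega
  src_eq m n h := x.src_eq (coeZ m) (coeZ n) (coeZ_le_coeZ h)
  rng_eq m n h := x.rng_eq (coeZ m) (coeZ n) (coeZ_le_coeZ h)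
  comp_eq l m n h1 h2 :=
    x.comp_eq (coeZ l) (coeZ m) (coeZ n) (coeZ_le_coeZ h1) (coeZ_le_coeZ h2)

/-- Stable equivalence: `x ∼ₛ y` iff the two paths eventually agree to the right. -/
def SRel {k : ℕ} {Λ : KGraph k} (x y : TwoSidedPath Λ) : Prop :=
  ∃ m : Fin k → ℤ, ∀ n (h : m ≤ n), x.toFun m n h = y.toFun m n h

/-- Unstable equivalence: `x ∼ᵤ y` iff the two paths eventually agree to the left. -/
def URel {k : ℕ} {Λ : KGraph k} (x y : TwoSidedPath Λ) : Prop :=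
  ∃ n : Fin k → ℤ, ∀ m (h : m ≤ n), x.toFun m n h = y.toFun m n h

/-- Asymptotic equivalence: `x ∼ₐ y` iff `x ∼ₛ y` and `x ∼ᵤ y`. -/
def ARel {k : ℕ} {Λ : KGraph k} (x y : TwoSidedPath Λ) : Prop :=
  ∃ m : Fin k → ℕ, ∀ n : Fin k → ℤ, coeZ m ≤ n →
    (∀ h : coeZ m ≤ n, x.toFun (coeZ m) n h = y.toFun (coeZ m) n h) ∧
    (∀ h' : -n ≤ -(coeZ m), x.toFun (-n) (-(coeZ m)) h' = y.toFun (-n) (-(coeZ m)) h')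

/-- The groupoid `G_{s,m}` of pairs agreeing from `m ∈ ℤ^k` onwards. -/
def Gsm {k : ℕ} (Λ : KGraph k) (m : Fin k → ℤ) :
    Set (TwoSidedPath Λ × TwoSidedPath Λ) :=
  {p | ∀ n (h : m ≤ n), p.1.toFun m n h = p.2.toFun m n h}

theorem TwoSidedPath.self_mem_cyl {k : ℕ} {Λ : KGraph k} (x : TwoSidedPath Λ)
    (m n : Fin k → ℤ) (h : m ≤ n) : x ∈ ZCyl Λ (x.toFun m n h) m := by
  show x.toFun m (m + Λ.degZ (x.toFun m n h)) _ = x.toFun m n h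
  apply x.toFun_congr rfl
  funext i
  show m i + (Λ.deg (x.toFun m n h) i : ℤ) = n i
  have h' := x.deg_eq m n h i
  omega

theorem degZ_obj0 {k : ℕ} {Λ : KGraph k} (x : TwoSidedPath Λ) :
    Λ.degZ x.obj0 = 0 := by
  funext i
  show (Λ.deg (x.toFun 0 0 le_rfl) i : ℤ) = 0
  have h' := x.deg_eq 0 0 le_rfl i
  simp only [Pi.zero_apply] at h'
  omega

theorem mem_vertex_cyl {k : ℕ} {Λ : KGraph k} {x z : TwoSidedPath Λ}
    (hz : z ∈ ZCyl Λ x.obj0 0) : z.obj0 = x.obj0 := by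
  have h0 : (0 : Fin k → ℤ) = 0 + Λ.degZ x.obj0 := by rw [degZ_obj0]; simp
  calc z.obj0 = z.toFun 0 (0 + Λ.degZ x.obj0) (le_add_degZ Λ 0 x.obj0) :=
        z.toFun_congr rfl h0 le_rfl (le_add_degZ Λ 0 x.obj0)
    _ = x.obj0 := hz


section Helpers

variable {k : ℕ} {Λ : KGraph k}

theorem TwoSidedPath.ext' {z w : TwoSidedPath Λ}
    (h : ∀ m n (hmn : m ≤ n), z.toFun m n hmn = w.toFun m n hmn) : z = w := by
  cases z; cases w
  have : ∀ m n (hmn : m ≤ n), _ = _ := h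
  simp only at this
  congr 1
  funext m n hmn
  exact this m n hmn

theorem deg_toFun_eq (z w : TwoSidedPath Λ) (m n : Fin k → ℤ) (h h' : m ≤ n) :
    Λ.deg (z.toFun m n h) = Λ.deg (w.toFun m n h') := by
  funext i
  have h1 := z.deg_eq m n h i
  have h2 := w.deg_eq m n h' i
  omega

theorem comp_congr {a a' b b' : Λ.Mor} (ha : a = a') (hb : b = b')
    (h : Λ.src a = Λ.rng b) (h' : Λ.src a' = Λ.rng b') :
    Λ.comp a b h = Λ.comp a' b' h' := by subst ha; subst hb; rfl

theorem factor_both (z w : TwoSidedPath Λ) (l m n : Fin k → ℤ)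
    (h1 : l ≤ m) (h2 : m ≤ n)
    (heq : z.toFun l n (h1.trans h2) = w.toFun l n (h1.trans h2)) :
    z.toFun l m h1 = w.toFun l m h1 ∧ z.toFun m n h2 = w.toFun m n h2 := by
  have hdeg : Λ.deg (z.toFun l n (h1.trans h2)) =
      Λ.deg (z.toFun l m h1) + Λ.deg (z.toFun m n h2) := by
    rw [← z.comp_eq l m n h1 h2, Λ.deg_comp]
  obtain ⟨p, _, hu⟩ := Λ.factor (z.toFun l n (h1.trans h2))
    (Λ.deg (z.toFun l m h1)) (Λ.deg (z.toFun m n h2)) hdeg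
  have e1 : (⟨z.toFun l m h1, z.toFun m n h2⟩ : Λ.Mor × Λ.Mor) = p :=
    hu _ ⟨rfl, rfl, ⟨(z.src_eq l m h1).trans (z.rng_eq m n h2).symm,
      z.comp_eq l m n h1 h2⟩⟩
  have e2 : (⟨w.toFun l m h1, w.toFun m n h2⟩ : Λ.Mor × Λ.Mor) = p :=
    hu _ ⟨(deg_toFun_eq w z l m h1 h1), (deg_toFun_eq w z m n h2 h2),
      ⟨(w.src_eq l m h1).trans (w.rng_eq m n h2).symm,
        (w.comp_eq l m n h1 h2).trans heq.symm⟩⟩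
  have := e1.trans e2.symm
  exact ⟨congrArg Prod.fst this, congrArg Prod.snd this⟩

theorem agree_of_halves (z w : TwoSidedPath Λ)
    (hneg : ∀ m n (h : m ≤ n), n ≤ 0 → z.toFun m n h = w.toFun m n h)
    (hpos : ∀ m n (h : m ≤ n), 0 ≤ m → z.toFun m n h = w.toFun m n h) :
    z = w := by
  apply TwoSidedPath.ext'
  intro m n hmn
  have hl'm : m ⊓ 0 ≤ m := inf_le_left
  have hl'0 : m ⊓ 0 ≤ (0 : Fin k → ℤ) := inf_le_right
  have h0n' : (0 : Fin k → ℤ) ≤ n ⊔ 0 := le_sup_right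
  have hnn' : n ≤ n ⊔ 0 := le_sup_left
  have big : z.toFun (m ⊓ 0) (n ⊔ 0) (hl'0.trans h0n') =
      w.toFun (m ⊓ 0) (n ⊔ 0) (hl'0.trans h0n') := by
    rw [← z.comp_eq (m ⊓ 0) 0 (n ⊔ 0) hl'0 h0n',
        ← w.comp_eq (m ⊓ 0) 0 (n ⊔ 0) hl'0 h0n']
    exact comp_congr (hneg _ _ hl'0 le_rfl) (hpos _ _ h0n' le_rfl) _ _
  have step1 := (factor_both z w (m ⊓ 0) m (n ⊔ 0) hl'm (hmn.trans hnn') big).2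
  exact (factor_both z w m n (n ⊔ 0) hmn hnn' step1).1

/-- The value of a bracket-like path on any interval bounded above by `N`
agrees with `x`, provided `x` and `y` agree on `[0, N]`. -/
theorem bra_val_left {x y : TwoSidedPath Λ} (z : TwoSidedPath Λ)
    (hzneg : ∀ m n (h : m ≤ n), n ≤ 0 → z.toFun m n h = x.toFun m n h)
    (hzpos : ∀ m n (h : m ≤ n), 0 ≤ m → z.toFun m n h = y.toFun m n h)
    {N : Fin k → ℤ} (hN : 0 ≤ N)
    (hagree : ∀ a b (hab : a ≤ b), 0 ≤ a → b ≤ N → x.toFun a b hab = y.toFun a b hab)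
    (a b : Fin k → ℤ) (hab : a ≤ b) (hbN : b ≤ N) :
    z.toFun a b hab = x.toFun a b hab := by
  have hl'a : a ⊓ 0 ≤ a := inf_le_left
  have hl'0 : a ⊓ 0 ≤ (0 : Fin k → ℤ) := inf_le_right
  have h0n' : (0 : Fin k → ℤ) ≤ b ⊔ 0 := le_sup_right
  have hbn' : b ≤ b ⊔ 0 := le_sup_left
  have hn'N : b ⊔ 0 ≤ N := sup_le hbN hN
  have big : z.toFun (a ⊓ 0) (b ⊔ 0) (hl'0.trans h0n') =
      x.toFun (a ⊓ 0) (b ⊔ 0) (hl'0.trans h0n') := by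
    rw [← z.comp_eq (a ⊓ 0) 0 (b ⊔ 0) hl'0 h0n',
        ← x.comp_eq (a ⊓ 0) 0 (b ⊔ 0) hl'0 h0n']
    exact comp_congr (hzneg _ _ hl'0 le_rfl)
      ((hzpos _ _ h0n' le_rfl).trans (hagree 0 (b ⊔ 0) h0n' le_rfl hn'N).symm) _ _
  have step1 := (factor_both z x (a ⊓ 0) a (b ⊔ 0) hl'a (hab.trans hbn') big).2
  exact (factor_both z x a b (b ⊔ 0) hab hbn' step1).1

theorem bra_val_right {x y : TwoSidedPath Λ} (z : TwoSidedPath Λ)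
    (hzneg : ∀ m n (h : m ≤ n), n ≤ 0 → z.toFun m n h = x.toFun m n h)
    (hzpos : ∀ m n (h : m ≤ n), 0 ≤ m → z.toFun m n h = y.toFun m n h)
    {N : Fin k → ℤ} (hN : 0 ≤ N)
    (hagree : ∀ a b (hab : a ≤ b), -N ≤ a → b ≤ 0 → x.toFun a b hab = y.toFun a b hab)
    (a b : Fin k → ℤ) (hab : a ≤ b) (haN : -N ≤ a) :
    z.toFun a b hab = y.toFun a b hab := by
  have hl'a : a ⊓ 0 ≤ a := inf_le_left
  have hl'0 : a ⊓ 0 ≤ (0 : Fin k → ℤ) := inf_le_right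
  have h0n' : (0 : Fin k → ℤ) ≤ b ⊔ 0 := le_sup_right
  have hbn' : b ≤ b ⊔ 0 := le_sup_left
  have hNl' : -N ≤ a ⊓ 0 := le_inf haN (neg_nonpos.mpr hN)
  have big : z.toFun (a ⊓ 0) (b ⊔ 0) (hl'0.trans h0n') =
      y.toFun (a ⊓ 0) (b ⊔ 0) (hl'0.trans h0n') := by
    rw [← z.comp_eq (a ⊓ 0) 0 (b ⊔ 0) hl'0 h0n',
        ← y.comp_eq (a ⊓ 0) 0 (b ⊔ 0) hl'0 h0n']
    exact comp_congr ((hzneg _ _ hl'0 le_rfl).trans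
      (hagree (a ⊓ 0) 0 hl'0 hNl' le_rfl)) (hzpos _ _ h0n' le_rfl) _ _
  have step1 := (factor_both z y (a ⊓ 0) a (b ⊔ 0) hl'a (hab.trans hbn') big).2
  exact (factor_both z y a b (b ⊔ 0) hab hbn' step1).1

end Helpers
/-- The bracket map is continuous and satisfies `[x,x] = x`,
`[[x,y],z] = [x,z]`, `[x,[y,z]] = [x,z]`, and is shift-equivariant:
`σ^n [x,y] = [σ^n x, σ^n y]` (for `n ∈ ℕ^k`, when `x` and `y` agree on
`0 ≤ a ≤ b ≤ n`) and `σ^{-n} [x,y] = [σ^{-n} x, σ^{-n} y]` (when they agree on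
`-n ≤ a ≤ b ≤ 0`). -/
theorem bracket_continuous_and_identities {k : ℕ} (hk : 0 < k) (Λ : KGraph k)
    (hstar : Λ.Star)
    (bra : ∀ x y : TwoSidedPath Λ, x.obj0 = y.obj0 → TwoSidedPath Λ)
    (hbra : ∀ x y (h : x.obj0 = y.obj0),
      (∀ m n (hmn : m ≤ n), n ≤ 0 → (bra x y h).toFun m n hmn = x.toFun m n hmn) ∧
      (∀ m n (hmn : m ≤ n), 0 ≤ m → (bra x y h).toFun m n hmn = y.toFun m n hmn)) :
    Continuous (fun q : {p : TwoSidedPath Λ × TwoSidedPath Λ //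
        p.1.obj0 = p.2.obj0} => bra q.1.1 q.1.2 q.2) ∧
    (∀ x (h : x.obj0 = x.obj0), bra x x h = x) ∧
    (∀ x y z (hxy : x.obj0 = y.obj0) (hyz : y.obj0 = z.obj0)
        (h1 : (bra x y hxy).obj0 = z.obj0) (h2 : x.obj0 = z.obj0),
      bra (bra x y hxy) z h1 = bra x z h2) ∧
    (∀ x y z (hxy : x.obj0 = y.obj0) (hyz : y.obj0 = z.obj0)
        (h1 : x.obj0 = (bra y z hyz).obj0) (h2 : x.obj0 = z.obj0),
      bra x (bra y z hyz) h1 = bra x z h2) ∧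
    (∀ (n : Fin k → ℕ) (x y : TwoSidedPath Λ) (hxy : x.obj0 = y.obj0),
      (∀ a b (hab : a ≤ b), 0 ≤ a → b ≤ coeZ n → x.toFun a b hab = y.toFun a b hab) →
      ∀ h' : (TwoSidedPath.shift (coeZ n) x).obj0 =
          (TwoSidedPath.shift (coeZ n) y).obj0,
        TwoSidedPath.shift (coeZ n) (bra x y hxy) =
          bra (TwoSidedPath.shift (coeZ n) x) (TwoSidedPath.shift (coeZ n) y) h') ∧
    (∀ (n : Fin k → ℕ) (x y : TwoSidedPath Λ) (hxy : x.obj0 = y.obj0),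
      (∀ a b (hab : a ≤ b), -(coeZ n) ≤ a → b ≤ 0 →
        x.toFun a b hab = y.toFun a b hab) →
      ∀ h' : (TwoSidedPath.shift (-(coeZ n)) x).obj0 =
          (TwoSidedPath.shift (-(coeZ n)) y).obj0,
        TwoSidedPath.shift (-(coeZ n)) (bra x y hxy) =
          bra (TwoSidedPath.shift (-(coeZ n)) x)
            (TwoSidedPath.shift (-(coeZ n)) y) h') := by
  refine ⟨?_, ?_, ?_, ?_, ?_, ?_⟩
  · -- continuity
    rw [continuous_generateFrom_iff]
    rintro S ⟨lam, n₀, rfl⟩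
    rw [isOpen_iff_forall_mem_open]
    rintro ⟨⟨x, y⟩, hxy⟩ hq
    set a' : Fin k → ℤ := n₀ ⊓ 0 with ha'
    set b' : Fin k → ℤ := (n₀ + Λ.degZ lam) ⊔ 0 with hb'
    have ha'0 : a' ≤ (0 : Fin k → ℤ) := inf_le_right
    have h0b' : (0 : Fin k → ℤ) ≤ b' := le_sup_right
    have ha'n : a' ≤ n₀ := inf_le_left
    have hnd : n₀ ≤ n₀ + Λ.degZ lam := le_add_degZ Λ n₀ lam
    have hdb' : n₀ + Λ.degZ lam ≤ b' := le_sup_left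
    set μ := x.toFun a' 0 ha'0 with hμ
    set ν := y.toFun 0 b' h0b' with hν
    refine ⟨{q' : {p : TwoSidedPath Λ × TwoSidedPath Λ // p.1.obj0 = p.2.obj0} |
        q'.1.1 ∈ ZCyl Λ μ a' ∧ q'.1.2 ∈ ZCyl Λ ν 0} , ?_, ?_, ?_⟩
    · rintro ⟨⟨x', y'⟩, hxy'⟩ ⟨hx', hy'⟩
      -- show bra x' y' ∈ ZCyl Λ lam n₀
      have hx'v : x'.toFun a' 0 ha'0 = μ := by
        refine Eq.trans ?_ hx'
        apply x'.toFun_congr rfl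
        funext i
        have hd := x.deg_eq a' 0 ha'0 i
        rw [← hμ] at hd
        show (0 : ℤ) = a' i + (Λ.deg μ i : ℤ)
        simp only [Pi.zero_apply] at hd ⊢
        omega
      have hy'v : y'.toFun 0 b' h0b' = ν := by
        refine Eq.trans ?_ hy'
        apply y'.toFun_congr rfl
        funext i
        have hd := y.deg_eq 0 b' h0b' i
        rw [← hν] at hd
        show b' i = 0 + (Λ.deg ν i : ℤ)
        simp only [Pi.zero_apply] at hd ⊢
        omega
      have hz := hbra x y hxy
      have hz' := hbra x' y' hxy'
      have big : (bra x' y' hxy').toFun a' b' (ha'0.trans h0b') =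
          (bra x y hxy).toFun a' b' (ha'0.trans h0b') := by
        rw [← (bra x' y' hxy').comp_eq a' 0 b' ha'0 h0b',
            ← (bra x y hxy).comp_eq a' 0 b' ha'0 h0b']
        exact comp_congr (((hz'.1 a' 0 ha'0 le_rfl).trans hx'v).trans
            (hz.1 a' 0 ha'0 le_rfl).symm)
          (((hz'.2 0 b' h0b' le_rfl).trans hy'v).trans
            (hz.2 0 b' h0b' le_rfl).symm) _ _
      have step1 := (factor_both (bra x' y' hxy') (bra x y hxy) a' n₀ b'
        ha'n (hnd.trans hdb') big).2
      have step2 := (factor_both (bra x' y' hxy') (bra x y hxy) n₀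
        (n₀ + Λ.degZ lam) b' hnd hdb' step1).1
      exact step2.trans hq
    · have hc1 : Continuous (fun q' : {p : TwoSidedPath Λ × TwoSidedPath Λ //
          p.1.obj0 = p.2.obj0} => q'.1.1) := continuous_fst.comp continuous_subtype_val
      have hc2 : Continuous (fun q' : {p : TwoSidedPath Λ × TwoSidedPath Λ //
          p.1.obj0 = p.2.obj0} => q'.1.2) := continuous_snd.comp continuous_subtype_val
      exact ((hc1.isOpen_preimage _ (isOpen_generateFrom_of_mem ⟨μ, a', rfl⟩)).inter
        (hc2.isOpen_preimage _ (isOpen_generateFrom_of_mem ⟨ν, 0, rfl⟩)))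
    · exact ⟨x.self_mem_cyl a' 0 ha'0, y.self_mem_cyl 0 b' h0b'⟩
  · -- bra x x = x
    intro x h
    exact agree_of_halves _ _ (hbra x x h).1 (hbra x x h).2
  · intro x y z hxy hyz h1 h2
    refine agree_of_halves _ _ (fun m n hmn hn => ?_) (fun m n hmn hm => ?_)
    · rw [(hbra _ _ h1).1 m n hmn hn, (hbra _ _ hxy).1 m n hmn hn,
        (hbra _ _ h2).1 m n hmn hn]
    · rw [(hbra _ _ h1).2 m n hmn hm, (hbra _ _ h2).2 m n hmn hm]
  · intro x y z hxy hyz h1 h2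
    refine agree_of_halves _ _ (fun m n hmn hn => ?_) (fun m n hmn hm => ?_)
    · rw [(hbra _ _ h1).1 m n hmn hn, (hbra _ _ h2).1 m n hmn hn]
    · rw [(hbra _ _ h1).2 m n hmn hm, (hbra _ _ hyz).2 m n hmn hm,
        (hbra _ _ h2).2 m n hmn hm]
  · -- positive shift
    intro n x y hxy hagree h'
    have hN : (0 : Fin k → ℤ) ≤ coeZ n := fun i => Int.natCast_nonneg (n i)
    refine agree_of_halves _ _ (fun m n' hmn hn' => ?_) (fun m n' hmn hm => ?_)
    · -- LHS = (bra x y)(m+N, n'+N), RHS = x(m+N, n'+N)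
      rw [(hbra _ _ h').1 m n' hmn hn']
      show (bra x y hxy).toFun (m + coeZ n) (n' + coeZ n) _ =
        x.toFun (m + coeZ n) (n' + coeZ n) _
      refine bra_val_left _ (hbra x y hxy).1 (hbra x y hxy).2 hN hagree _ _
        (add_le_add_left hmn _) ?_
      intro i
      have h1 := hn' i
      simp only [Pi.add_apply, Pi.zero_apply] at h1 ⊢
      omega
    · rw [(hbra _ _ h').2 m n' hmn hm]
      show (bra x y hxy).toFun (m + coeZ n) (n' + coeZ n) _ =
        y.toFun (m + coeZ n) (n' + coeZ n) _
      exact (hbra x y hxy).2 _ _ (add_le_add_left hmn _)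
        (add_nonneg hm hN)
  · -- negative shift
    intro n x y hxy hagree h'
    have hN : (0 : Fin k → ℤ) ≤ coeZ n := fun i => Int.natCast_nonneg (n i)
    refine agree_of_halves _ _ (fun m n' hmn hn' => ?_) (fun m n' hmn hm => ?_)
    · rw [(hbra _ _ h').1 m n' hmn hn']
      show (bra x y hxy).toFun (m + -coeZ n) (n' + -coeZ n) _ =
        x.toFun (m + -coeZ n) (n' + -coeZ n) _
      refine (hbra x y hxy).1 _ _ (add_le_add_left hmn _) ?_
      intro i
      have h1 := hn' i
      have h2 := hN i
      simp only [Pi.add_apply, Pi.neg_apply, Pi.zero_apply] at h1 h2 ⊢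
      omega
    · rw [(hbra _ _ h').2 m n' hmn hm]
      show (bra x y hxy).toFun (m + -coeZ n) (n' + -coeZ n) _ =
        y.toFun (m + -coeZ n) (n' + -coeZ n) _
      refine bra_val_right _ (hbra x y hxy).1 (hbra x y hxy).2 hN hagree _ _
        (add_le_add_left hmn _) ?_
      intro i
      have h1 := hm i
      simp only [Pi.add_apply, Pi.neg_apply, Pi.zero_apply] at h1 ⊢
      omega
end

section
/- Let (Λ,d) be a k-graph satisfying the standing assumption (★). Then the restriction map π : Λ^Δ → Λ^Ω, π(x)(m,n) = x(m,n) for (m,n) ∈ Ω, is a continuous, open surjection (with respect to the cylinder-set topologies on Λ^Δ and Λ^Ω), and π ∘ σ^p = σ^p ∘ π for every p ∈ ℕ^k. -/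
open scoped Classical
open TopologicalSpace MeasureTheory

namespace KGraph
variable {k : ℕ} {Λ : KGraph k}

theorem comp_congr {a b a' b' : Λ.Mor} (ha : a = a') (hb : b = b')
    (h : Λ.src a = Λ.rng b) (h' : Λ.src a' = Λ.rng b') :
    Λ.comp a b h = Λ.comp a' b' h' := by subst ha; subst hb; rfl

theorem comp_inj {a1 b1 a2 b2 : Λ.Mor} (h1 : Λ.src a1 = Λ.rng b1)
    (h2 : Λ.src a2 = Λ.rng b2) (hd : Λ.deg a1 = Λ.deg a2)
    (h : Λ.comp a1 b1 h1 = Λ.comp a2 b2 h2) : a1 = a2 ∧ b1 = b2 := by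
  have hd2 : Λ.deg b1 = Λ.deg b2 := by
    have e1 := Λ.deg_comp a1 b1 h1
    have e2 := Λ.deg_comp a2 b2 h2
    rw [h, e2] at e1
    funext i
    have t1 := congrFun e1 i
    have t2 := congrFun hd i
    simp only [Pi.add_apply] at t1 t2
    omega
  obtain ⟨p, hp, hu⟩ := Λ.factor (Λ.comp a1 b1 h1) (Λ.deg a1) (Λ.deg b1)
    (Λ.deg_comp _ _ _)
  have e1 := hu (a1, b1) ⟨rfl, rfl, h1, rfl⟩
  have e2 := hu (a2, b2) ⟨hd.symm, hd2.symm, h2, h.symm⟩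
  have e3 := e1.trans e2.symm
  exact ⟨congrArg Prod.fst e3, congrArg Prod.snd e3⟩

theorem seg_exists (lam : Λ.Mor) (p q : Fin k → ℕ) (h1 : p ≤ q)
    (h2 : q ≤ Λ.deg lam) :
    ∃ b : Λ.Mor, Λ.deg b = q - p ∧
      ∃ (a c : Λ.Mor), Λ.deg a = p ∧
        ∃ (hi : Λ.src b = Λ.rng c)
          (ho : Λ.src a = Λ.rng (Λ.comp b c hi)),
          Λ.comp a (Λ.comp b c hi) ho = lam := by
  have hdeg : Λ.deg lam = p + (Λ.deg lam - p) := by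
    funext i; have t1 : p i ≤ q i := h1 i; have t2 : q i ≤ Λ.deg lam i := h2 i
    simp only [Pi.add_apply, Pi.sub_apply]; omega
  obtain ⟨⟨a, bc⟩, ⟨hda, hdbc, ha, hca⟩, -⟩ := Λ.factor lam p (Λ.deg lam - p) hdeg
  have hdeg2 : Λ.deg bc = (q - p) + (Λ.deg lam - q) := by
    rw [hdbc]; funext i; have t1 : p i ≤ q i := h1 i; have t2 : q i ≤ Λ.deg lam i := h2 i
    simp only [Pi.add_apply, Pi.sub_apply]; omega
  obtain ⟨⟨b, c⟩, ⟨hdb, hdc, hb, hcb⟩, -⟩ := Λ.factor bc (q - p) (Λ.deg lam - q) hdeg2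
  refine ⟨b, hdb, a, c, hda, hb, ?_, ?_⟩
  · rw [hcb]; exact ha
  · rw [← hca]; exact comp_congr rfl hcb _ _

/-- The segment `[p,q]` of a morphism `lam`. -/
noncomputable def seg (Λ : KGraph k) (lam : Λ.Mor) (p q : Fin k → ℕ)
    (h1 : p ≤ q) (h2 : q ≤ Λ.deg lam) : Λ.Mor :=
  (seg_exists lam p q h1 h2).choose

theorem seg_spec (lam : Λ.Mor) (p q : Fin k → ℕ) (h1 : p ≤ q) (h2 : q ≤ Λ.deg lam) :
    Λ.deg (Λ.seg lam p q h1 h2) = q - p ∧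
      ∃ (a c : Λ.Mor), Λ.deg a = p ∧
        ∃ (hi : Λ.src (Λ.seg lam p q h1 h2) = Λ.rng c)
          (ho : Λ.src a = Λ.rng (Λ.comp (Λ.seg lam p q h1 h2) c hi)),
          Λ.comp a (Λ.comp (Λ.seg lam p q h1 h2) c hi) ho = lam :=
  (seg_exists lam p q h1 h2).choose_spec

theorem seg_deg (lam : Λ.Mor) (p q : Fin k → ℕ) (h1 : p ≤ q) (h2 : q ≤ Λ.deg lam) :
    Λ.deg (Λ.seg lam p q h1 h2) = q - p := (seg_spec lam p q h1 h2).1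

theorem seg_unique {lam a b c : Λ.Mor} {p q : Fin k → ℕ} (h1 : p ≤ q)
    (h2 : q ≤ Λ.deg lam) (hda : Λ.deg a = p) (hdb : Λ.deg b = q - p)
    (hi : Λ.src b = Λ.rng c) (ho : Λ.src a = Λ.rng (Λ.comp b c hi))
    (hc : Λ.comp a (Λ.comp b c hi) ho = lam) :
    Λ.seg lam p q h1 h2 = b := by
  obtain ⟨hds, a', c', hda', hi', ho', hc'⟩ := seg_spec lam p q h1 h2
  have hfst := comp_inj ho' ho (by rw [hda', hda]) (hc'.trans hc.symm)
  exact (comp_inj hi' hi (by rw [hds, hdb]) hfst.2).1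

theorem seg_congr {lam lam' : Λ.Mor} {p q p' q' : Fin k → ℕ} (hl : lam = lam')
    (hp : p = p') (hq : q = q') (h1 : p ≤ q) (h2 : q ≤ Λ.deg lam)
    (h1' : p' ≤ q') (h2' : q' ≤ Λ.deg lam') :
    Λ.seg lam p q h1 h2 = Λ.seg lam' p' q' h1' h2' := by
  subst hl; subst hp; subst hq; rfl

theorem assoc' (l m n : Λ.Mor) (h1 : Λ.src l = Λ.rng m) (h2 : Λ.src m = Λ.rng n) :
    Λ.comp (Λ.comp l m h1) n ((Λ.src_comp l m h1).trans h2) =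
    Λ.comp l (Λ.comp m n h2) (h1.trans (Λ.rng_comp m n h2).symm) :=
  Λ.assoc l m n h1 h2 _ _

theorem sub_self_pi (q : Fin k → ℕ) : q - q = 0 := by
  funext i; simp only [Pi.sub_apply, Pi.zero_apply]; omega

theorem sub_zero_pi (q : Fin k → ℕ) : q - 0 = q := by
  funext i; simp only [Pi.sub_apply, Pi.zero_apply]; omega

theorem seg_full (lam : Λ.Mor) (h1 : (0 : Fin k → ℕ) ≤ Λ.deg lam)
    (h2 : Λ.deg lam ≤ Λ.deg lam) : Λ.seg lam 0 (Λ.deg lam) h1 h2 = lam := by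
  have hsv : Λ.rng (Λ.src lam) = Λ.src lam := Λ.rng_obj _ (Λ.deg_src lam)
  have hi : Λ.src lam = Λ.rng (Λ.src lam) := hsv.symm
  have hin : Λ.comp lam (Λ.src lam) hi = lam := Λ.comp_id lam hi
  have ho : Λ.src (Λ.rng lam) = Λ.rng (Λ.comp lam (Λ.src lam) hi) := by
    rw [Λ.rng_comp, Λ.src_obj _ (Λ.deg_rng lam)]
  refine seg_unique h1 h2 (Λ.deg_rng lam) (by rw [sub_zero_pi]) hi ho ?_
  have ho' : Λ.src (Λ.rng lam) = Λ.rng lam := Λ.src_obj _ (Λ.deg_rng lam)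
  calc Λ.comp (Λ.rng lam) (Λ.comp lam (Λ.src lam) hi) ho
      = Λ.comp (Λ.rng lam) lam ho' := comp_congr rfl hin _ _
    _ = lam := Λ.id_comp lam ho'

theorem seg_comp (lam : Λ.Mor) (p q r : Fin k → ℕ) (hpq : p ≤ q) (hqr : q ≤ r)
    (h2 : r ≤ Λ.deg lam) :
    ∃ h : Λ.src (Λ.seg lam p q hpq (hqr.trans h2)) = Λ.rng (Λ.seg lam q r hqr h2),
      Λ.comp (Λ.seg lam p q hpq (hqr.trans h2)) (Λ.seg lam q r hqr h2) h =
        Λ.seg lam p r (hpq.trans hqr) h2 := by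
  obtain ⟨hds, a, c, hda, hi, ho, hcomp⟩ := seg_spec lam p r (hpq.trans hqr) h2
  set C := Λ.seg lam p r (hpq.trans hqr) h2 with hC
  have hdC : Λ.deg C = (q - p) + (r - q) := by
    rw [hds]; funext i
    have t1 : p i ≤ q i := hpq i; have t2 : q i ≤ r i := hqr i
    simp only [Pi.add_apply, Pi.sub_apply]; omega
  obtain ⟨⟨C1, C2⟩, ⟨hd1, hd2, h12, hcc⟩, -⟩ := Λ.factor C (q - p) (r - q) hdC
  -- lam = comp a (comp C1 (comp C2 c))
  have h2c : Λ.src C2 = Λ.rng c := by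
    have : Λ.src C = Λ.src C2 := by rw [← hcc, Λ.src_comp]
    rw [← this]; exact hi
  have h1cc : Λ.src C1 = Λ.rng (Λ.comp C2 c h2c) := by
    rw [Λ.rng_comp]; exact h12
  have key : Λ.comp C1 (Λ.comp C2 c h2c) h1cc = Λ.comp C c hi := by
    rw [← assoc' C1 C2 c h12 h2c]
    exact comp_congr hcc rfl _ _
  have hoa : Λ.src a = Λ.rng (Λ.comp C1 (Λ.comp C2 c h2c) h1cc) := by
    rw [key]; exact ho
  have hlam : Λ.comp a (Λ.comp C1 (Λ.comp C2 c h2c) h1cc) hoa = lam := by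
    rw [← hcomp]; exact comp_congr rfl key _ _
  have e1 : Λ.seg lam p q hpq (hqr.trans h2) = C1 :=
    seg_unique _ _ hda hd1 h1cc hoa hlam
  -- seg q r = C2
  have hac : Λ.src a = Λ.rng C1 := by
    rw [hoa, Λ.rng_comp]
  have hdac : Λ.deg (Λ.comp a C1 hac) = q := by
    rw [Λ.deg_comp, hda, hd1]; funext i
    have t1 : p i ≤ q i := hpq i
    simp only [Pi.add_apply, Pi.sub_apply]; omega
  have hoac : Λ.src (Λ.comp a C1 hac) = Λ.rng (Λ.comp C2 c h2c) := by
    rw [Λ.src_comp, Λ.rng_comp]; exact h12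
  have hlam2 : Λ.comp (Λ.comp a C1 hac) (Λ.comp C2 c h2c) hoac = lam := by
    have := assoc' a C1 (Λ.comp C2 c h2c) hac h1cc
    calc Λ.comp (Λ.comp a C1 hac) (Λ.comp C2 c h2c) hoac
        = Λ.comp a (Λ.comp C1 (Λ.comp C2 c h2c) h1cc) _ := this
      _ = lam := hlam
  have e2 : Λ.seg lam q r hqr h2 = C2 :=
    seg_unique _ _ hdac hd2 h2c hoac hlam2
  refine ⟨by rw [e1, e2]; exact h12, ?_⟩
  calc Λ.comp (Λ.seg lam p q hpq (hqr.trans h2)) (Λ.seg lam q r hqr h2) _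
      = Λ.comp C1 C2 h12 := comp_congr e1 e2 _ _
    _ = C := hcc

theorem seg_deg_zero (lam : Λ.Mor) (q : Fin k → ℕ) (h2 : q ≤ Λ.deg lam) :
    Λ.deg (Λ.seg lam q q le_rfl h2) = 0 := by
  rw [seg_deg, sub_self_pi]

theorem seg_src (lam : Λ.Mor) (p q : Fin k → ℕ) (h1 : p ≤ q) (h2 : q ≤ Λ.deg lam) :
    Λ.src (Λ.seg lam p q h1 h2) = Λ.seg lam q q le_rfl h2 := by
  obtain ⟨h, -⟩ := seg_comp lam p q q h1 le_rfl h2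
  rw [h, Λ.rng_obj _ (seg_deg_zero lam q h2)]

theorem seg_rng (lam : Λ.Mor) (p q : Fin k → ℕ) (h1 : p ≤ q) (h2 : q ≤ Λ.deg lam) :
    Λ.rng (Λ.seg lam p q h1 h2) = Λ.seg lam p p le_rfl (h1.trans h2) := by
  obtain ⟨h, -⟩ := seg_comp lam p p q le_rfl h1 h2
  rw [← h, Λ.src_obj _ (seg_deg_zero lam p (h1.trans h2))]

theorem seg_left_extend (u lam : Λ.Mor) (hc : Λ.src u = Λ.rng lam)
    (p q : Fin k → ℕ) (h1 : p ≤ q) (h2 : q ≤ Λ.deg lam)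
    (h1' : Λ.deg u + p ≤ Λ.deg u + q) (h2' : Λ.deg u + q ≤ Λ.deg (Λ.comp u lam hc)) :
    Λ.seg (Λ.comp u lam hc) (Λ.deg u + p) (Λ.deg u + q) h1' h2' =
      Λ.seg lam p q h1 h2 := by
  obtain ⟨hds, a, c, hda, hi, ho, hcomp⟩ := seg_spec lam p q h1 h2
  set b := Λ.seg lam p q h1 h2 with hb
  have hua : Λ.src u = Λ.rng a := by
    rw [hc, ← hcomp, Λ.rng_comp]
  have hou : Λ.src (Λ.comp u a hua) = Λ.rng (Λ.comp b c hi) := by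
    rw [Λ.src_comp]; exact ho
  have hlam : Λ.comp (Λ.comp u a hua) (Λ.comp b c hi) hou = Λ.comp u lam hc := by
    calc Λ.comp (Λ.comp u a hua) (Λ.comp b c hi) hou
        = Λ.comp u (Λ.comp a (Λ.comp b c hi) ho) _ := assoc' u a _ hua ho
      _ = Λ.comp u lam hc := comp_congr rfl hcomp _ _
  refine seg_unique h1' h2' (by rw [Λ.deg_comp, hda]) ?_ hi hou hlam
  rw [hds]; funext i
  simp only [Pi.add_apply, Pi.sub_apply]; omega

theorem seg_right_extend (lam w : Λ.Mor) (hc : Λ.src lam = Λ.rng w)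
    (p q : Fin k → ℕ) (h1 : p ≤ q) (h2 : q ≤ Λ.deg lam)
    (h2' : q ≤ Λ.deg (Λ.comp lam w hc)) :
    Λ.seg (Λ.comp lam w hc) p q h1 h2' = Λ.seg lam p q h1 h2 := by
  obtain ⟨hds, a, c, hda, hi, ho, hcomp⟩ := seg_spec lam p q h1 h2
  set b := Λ.seg lam p q h1 h2 with hb
  have hcw : Λ.src c = Λ.rng w := by
    rw [← hc, ← hcomp, Λ.src_comp, Λ.src_comp]
  have hicw : Λ.src b = Λ.rng (Λ.comp c w hcw) := by
    rw [Λ.rng_comp]; exact hi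
  have hbcw : Λ.src (Λ.comp b c hi) = Λ.rng w := by
    rw [Λ.src_comp]; exact hcw
  have key : Λ.comp (Λ.comp b c hi) w hbcw =
      Λ.comp b (Λ.comp c w hcw) hicw := assoc' b c w hi hcw
  have ho2 : Λ.src a = Λ.rng b := ho.trans (Λ.rng_comp b c hi)
  have ho' : Λ.src a = Λ.rng (Λ.comp b (Λ.comp c w hcw) hicw) := by
    rw [← key, Λ.rng_comp, Λ.rng_comp]; exact ho2
  have hcomplam : Λ.src (Λ.comp a (Λ.comp b c hi) ho) = Λ.rng w := by
    rw [Λ.src_comp]; exact hbcw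
  have hlam : Λ.comp a (Λ.comp b (Λ.comp c w hcw) hicw) ho' = Λ.comp lam w hc := by
    calc Λ.comp a (Λ.comp b (Λ.comp c w hcw) hicw) ho'
        = Λ.comp a (Λ.comp (Λ.comp b c hi) w hbcw) (by rw [key]; exact ho') :=
          comp_congr rfl key.symm _ _
      _ = Λ.comp (Λ.comp a (Λ.comp b c hi) ho) w hcomplam := (assoc' a _ w ho hbcw).symm
      _ = Λ.comp lam w hc := comp_congr hcomp rfl _ _
  exact seg_unique h1 h2' hda hds hicw ho' hlam

end KGraph

namespace OneSidedPath
variable {k : ℕ} {Λ : KGraph k}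

theorem ext' {x y : OneSidedPath Λ}
    (h : ∀ m n (hh : m ≤ n), x.toFun m n hh = y.toFun m n hh) : x = y := by
  cases x; cases y
  have : _ = _ := funext fun m => funext fun n => funext fun hh => h m n hh
  simp only [mk.injEq]
  exact this

theorem toFun_congr (x : OneSidedPath Λ) {m n m' n' : Fin k → ℕ}
    (hm : m = m') (hn : n = n') (h : m ≤ n) (h' : m' ≤ n') :
    x.toFun m n h = x.toFun m' n' h' := by subst hm; subst hn; rfl

theorem deg_toFun (y : OneSidedPath Λ) (m n : Fin k → ℕ) (h : m ≤ n) :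
    Λ.deg (y.toFun m n h) = n - m := by
  funext i; rw [y.deg_eq m n h i]; rfl

end OneSidedPath

namespace KGraph
variable {k : ℕ} {Λ : KGraph k}

theorem seg_onesided (y : OneSidedPath Λ) (M m n : Fin k → ℕ) (hmn : m ≤ n)
    (hnM : n ≤ M) (h0 : (0 : Fin k → ℕ) ≤ M)
    (h2 : n ≤ Λ.deg (y.toFun 0 M h0)) :
    Λ.seg (y.toFun 0 M h0) m n hmn h2 = y.toFun m n hmn := by
  have hi : Λ.src (y.toFun m n hmn) = Λ.rng (y.toFun n M (hnM)) := by
    rw [y.src_eq, y.rng_eq]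
  have hin : Λ.comp (y.toFun m n hmn) (y.toFun n M hnM) hi = y.toFun m M (hmn.trans hnM) := by
    rw [← y.comp_eq m n M hmn hnM]
  have h0m : (0 : Fin k → ℕ) ≤ m := Pi.le_def.mpr fun i => Nat.zero_le _
  have ho : Λ.src (y.toFun 0 m h0m) = Λ.rng (Λ.comp (y.toFun m n hmn) (y.toFun n M hnM) hi) := by
    rw [Λ.rng_comp, y.src_eq, y.rng_eq]
  have hfull : Λ.comp (y.toFun 0 m h0m) (Λ.comp (y.toFun m n hmn) (y.toFun n M hnM) hi) ho
      = y.toFun 0 M h0 := by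
    calc Λ.comp (y.toFun 0 m h0m) (Λ.comp (y.toFun m n hmn) (y.toFun n M hnM) hi) ho
        = Λ.comp (y.toFun 0 m h0m) (y.toFun m M (hmn.trans hnM)) (by rw [y.src_eq, y.rng_eq]) :=
          comp_congr rfl hin _ _
      _ = y.toFun 0 M h0 := by rw [← y.comp_eq 0 m M h0m (hmn.trans hnM)]
  refine seg_unique hmn h2 ?_ ?_ hi ho hfull
  · rw [y.deg_toFun, sub_zero_pi]
  · rw [y.deg_toFun]

/-- Choice of a morphism of degree `(1,…,1)` with source `v`. -/
noncomputable def pick (Λ : KGraph k) (hstar : Λ.Star) (v : Λ.Mor) : Λ.Mor :=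
  if hv : Λ.IsVertex v then ((hstar (fun _ => 1)).1 v hv).2.choose else v

theorem pick_spec (hstar : Λ.Star) {v : Λ.Mor} (hv : Λ.IsVertex v) :
    Λ.deg (Λ.pick hstar v) = (fun _ => 1) ∧ Λ.src (Λ.pick hstar v) = v := by
  rw [pick, dif_pos hv]
  exact ((hstar (fun _ => 1)).1 v hv).2.choose_spec

/-- The left chain `L_N` extending `ν` to the left by `N` steps. -/
noncomputable def Lc (Λ : KGraph k) (hstar : Λ.Star) (nu : Λ.Mor) :
    ℕ → Λ.Mor
  | 0 => nu
  | n + 1 => Λ.comp (Λ.pick hstar (Λ.rng (Λ.Lc hstar nu n))) (Λ.Lc hstar nu n)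
      (pick_spec hstar (Λ.deg_rng _)).2

theorem Lc_deg (hstar : Λ.Star) (nu : Λ.Mor) (n : ℕ) :
    Λ.deg (Λ.Lc hstar nu n) = fun i => Λ.deg nu i + n := by
  induction n with
  | zero => funext i; simp [Lc]
  | succ n ih =>
    show Λ.deg (Λ.comp _ _ _) = _
    rw [Λ.deg_comp, (pick_spec hstar (Λ.deg_rng _)).1, ih]
    funext i; simp only [Pi.add_apply]; omega

theorem Lc_src (hstar : Λ.Star) (nu : Λ.Mor) (n : ℕ) :
    Λ.src (Λ.Lc hstar nu n) = Λ.src nu := by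
  induction n with
  | zero => rfl
  | succ n ih => rw [Lc, Λ.src_comp, ih]

theorem Lc_extend (hstar : Λ.Star) (nu : Λ.Mor) (N a : ℕ) :
    ∃ (u : Λ.Mor) (_ : Λ.deg u = fun _ => a)
      (h : Λ.src u = Λ.rng (Λ.Lc hstar nu N)),
      Λ.Lc hstar nu (N + a) = Λ.comp u (Λ.Lc hstar nu N) h := by
  induction a with
  | zero =>
    refine ⟨Λ.rng (Λ.Lc hstar nu N), ?_, Λ.src_obj _ (Λ.deg_rng _), ?_⟩
    · rw [Λ.deg_rng]; rfl
    · exact (Λ.id_comp (Λ.Lc hstar nu N) _).symm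
  | succ a ih =>
    obtain ⟨u, hu, h, he⟩ := ih
    have hv : Λ.IsVertex (Λ.rng (Λ.Lc hstar nu (N + a))) := Λ.deg_rng _
    have hps := pick_spec hstar hv
    have hpu : Λ.src (Λ.pick hstar (Λ.rng (Λ.Lc hstar nu (N + a)))) = Λ.rng u := by
      rw [hps.2, he, Λ.rng_comp]
    refine ⟨Λ.comp (Λ.pick hstar (Λ.rng (Λ.Lc hstar nu (N + a)))) u hpu, ?_, ?_, ?_⟩
    · rw [Λ.deg_comp, hps.1, hu]; funext i; simp only [Pi.add_apply]; omega
    · rw [Λ.src_comp]; exact h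
    · show Λ.comp _ (Λ.Lc hstar nu (N + a)) _ = _
      calc Λ.comp (Λ.pick hstar (Λ.rng (Λ.Lc hstar nu (N + a)))) (Λ.Lc hstar nu (N + a))
            (pick_spec hstar (Λ.deg_rng _)).2
          = Λ.comp (Λ.pick hstar (Λ.rng (Λ.Lc hstar nu (N + a)))) (Λ.comp u (Λ.Lc hstar nu N) h)
            (by rw [← he]; exact hps.2) := comp_congr rfl he _ _
        _ = Λ.comp (Λ.comp (Λ.pick hstar (Λ.rng (Λ.Lc hstar nu (N + a)))) u hpu)
            (Λ.Lc hstar nu N) _ := (assoc' _ u _ hpu h).symm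

theorem zero_le_pi (M : Fin k → ℕ) : (0 : Fin k → ℕ) ≤ M :=
  Pi.le_def.mpr fun _ => Nat.zero_le _

/-- The bi-infinite approximant `B_{N,M} = L_N(ν) · y(0, M·1)`. -/
noncomputable def Bp (Λ : KGraph k) (hstar : Λ.Star) (nu : Λ.Mor)
    (y : OneSidedPath Λ) (hsv : Λ.src nu = y.toFun 0 0 le_rfl)
    (N M : ℕ) : Λ.Mor :=
  Λ.comp (Λ.Lc hstar nu N) (y.toFun 0 (fun _ => M) (zero_le_pi _))
    (((Lc_src hstar nu N).trans hsv).trans (y.rng_eq 0 _ _).symm)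

theorem Bp_deg (hstar : Λ.Star) (nu : Λ.Mor) (y : OneSidedPath Λ)
    (hsv : Λ.src nu = y.toFun 0 0 le_rfl) (N M : ℕ) :
    Λ.deg (Λ.Bp hstar nu y hsv N M) = fun i => Λ.deg nu i + N + M := by
  rw [Bp, Λ.deg_comp, Lc_deg, y.deg_toFun]
  funext i; simp only [Pi.add_apply, Pi.sub_apply, Pi.zero_apply]; omega

theorem Bp_extend (hstar : Λ.Star) (nu : Λ.Mor) (y : OneSidedPath Λ)
    (hsv : Λ.src nu = y.toFun 0 0 le_rfl) {N M N' M' : ℕ}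
    (hN : N ≤ N') (hM : M ≤ M') :
    ∃ (u w : Λ.Mor) (_ : Λ.deg u = fun _ => N' - N)
      (h2 : Λ.src (Λ.Bp hstar nu y hsv N M) = Λ.rng w)
      (h3 : Λ.src u = Λ.rng (Λ.comp (Λ.Bp hstar nu y hsv N M) w h2)),
      Λ.Bp hstar nu y hsv N' M' = Λ.comp u (Λ.comp (Λ.Bp hstar nu y hsv N M) w h2) h3 := by
  obtain ⟨u, hu, h, he⟩ := Lc_extend hstar nu N (N' - N)
  have heN : Λ.Lc hstar nu N' = Λ.comp u (Λ.Lc hstar nu N) h := by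
    rw [← he]; congr 1; omega
  set w := y.toFun (fun _ => M) (fun _ => M') (Pi.le_def.mpr fun _ => hM) with hw
  have hyM : y.toFun 0 (fun _ => M') (zero_le_pi _) =
      Λ.comp (y.toFun 0 (fun _ => M) (zero_le_pi _)) w
        ((y.src_eq _ _ _).trans (y.rng_eq _ _ _).symm) := by
    rw [y.comp_eq]
  have h2 : Λ.src (Λ.Bp hstar nu y hsv N M) = Λ.rng w := by
    rw [Bp, Λ.src_comp, y.src_eq, hw, y.rng_eq]
  have key : Λ.comp (Λ.Bp hstar nu y hsv N M) w h2 =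
      Λ.comp (Λ.Lc hstar nu N) (y.toFun 0 (fun _ => M') (zero_le_pi _))
        (((Lc_src hstar nu N).trans hsv).trans (y.rng_eq 0 _ _).symm) := by
    have hsw : Λ.src (y.toFun 0 (fun _ => M) (zero_le_pi _)) = Λ.rng w := by
      rw [y.src_eq, hw, y.rng_eq]
    calc Λ.comp (Λ.Bp hstar nu y hsv N M) w h2
        = Λ.comp (Λ.comp (Λ.Lc hstar nu N) (y.toFun 0 (fun _ => M) (zero_le_pi _))
            (((Lc_src hstar nu N).trans hsv).trans (y.rng_eq 0 _ _).symm)) w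
            ((Λ.src_comp _ _ _).trans hsw) := rfl
      _ = Λ.comp (Λ.Lc hstar nu N)
            (Λ.comp (y.toFun 0 (fun _ => M) (zero_le_pi _)) w hsw) _ :=
            assoc' _ _ _ _ hsw
      _ = Λ.comp (Λ.Lc hstar nu N) (y.toFun 0 (fun _ => M') (zero_le_pi _))
            (((Lc_src hstar nu N).trans hsv).trans (y.rng_eq 0 _ _).symm) := by
            refine comp_congr rfl ?_ _ _
            rw [hyM]
  have h3 : Λ.src u = Λ.rng (Λ.comp (Λ.Bp hstar nu y hsv N M) w h2) := by
    rw [key, Λ.rng_comp]; exact h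
  refine ⟨u, w, hu, h2, h3, ?_⟩
  calc Λ.Bp hstar nu y hsv N' M'
      = Λ.comp (Λ.comp u (Λ.Lc hstar nu N) h) (y.toFun 0 (fun _ => M') (zero_le_pi _))
        (by rw [← heN]; exact ((Lc_src hstar nu N').trans hsv).trans (y.rng_eq 0 _ _).symm) := by
        rw [Bp]; exact comp_congr heN rfl _ _
    _ = Λ.comp u (Λ.comp (Λ.Lc hstar nu N) (y.toFun 0 (fun _ => M') (zero_le_pi _))
        (((Lc_src hstar nu N).trans hsv).trans (y.rng_eq 0 _ _).symm)) _ := assoc' _ _ _ h _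
    _ = Λ.comp u (Λ.comp (Λ.Bp hstar nu y hsv N M) w h2) h3 := comp_congr rfl key.symm _ _

/-- Translation of a `ℤ^k` index to an index into `B_{N,M}`. -/
def idx (D : Fin k → ℕ) (N : ℕ) (m : Fin k → ℤ) : Fin k → ℕ :=
  fun i => (m i + D i + N).toNat

theorem idx_le_idx {D : Fin k → ℕ} {N : ℕ} {m n : Fin k → ℤ} (hmn : m ≤ n) :
    idx D N m ≤ idx D N n :=
  Pi.le_def.mpr fun i => by
    have t : m i ≤ n i := hmn i
    simp only [idx]; omega

/-- The value `x(m,n)` of the extension, computed inside `B_{N,M}`. -/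
noncomputable def val (hstar : Λ.Star) (nu : Λ.Mor) (y : OneSidedPath Λ)
    (hsv : Λ.src nu = y.toFun 0 0 le_rfl) (N M : ℕ)
    (m n : Fin k → ℤ) (hmn : m ≤ n) (hnM : ∀ i, n i ≤ (M : ℤ)) : Λ.Mor :=
  Λ.seg (Λ.Bp hstar nu y hsv N M) (idx (Λ.deg nu) N m) (idx (Λ.deg nu) N n)
    (idx_le_idx hmn)
    (Pi.le_def.mpr fun i => by
      have t : n i ≤ (M : ℤ) := hnM i
      have hd := congrFun (Bp_deg hstar nu y hsv N M) i
      simp only [idx]; omega)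

theorem val_invar (hstar : Λ.Star) (nu : Λ.Mor) (y : OneSidedPath Λ)
    (hsv : Λ.src nu = y.toFun 0 0 le_rfl) {N M N' M' : ℕ}
    (m n : Fin k → ℤ) (hmn : m ≤ n)
    (hNm : ∀ i, -(N : ℤ) ≤ m i) (hnM : ∀ i, n i ≤ (M : ℤ))
    (hNm' : ∀ i, -(N' : ℤ) ≤ m i) (hnM' : ∀ i, n i ≤ (M' : ℤ)) :
    Λ.val hstar nu y hsv N M m n hmn hnM = Λ.val hstar nu y hsv N' M' m n hmn hnM' := by
  set D := Λ.deg nu with hD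
  have mono : ∀ {A B A' B' : ℕ}, A ≤ A' → B ≤ B' →
      (∀ i, -(A : ℤ) ≤ m i) → ∀ (hB : ∀ i, n i ≤ (B : ℤ)) (hB' : ∀ i, n i ≤ (B' : ℤ)),
      Λ.val hstar nu y hsv A B m n hmn hB = Λ.val hstar nu y hsv A' B' m n hmn hB' := by
    intro A B A' B' hAA hBB hA hB hB'
    obtain ⟨u, w, hu, h2, h3, he⟩ := Bp_extend hstar nu y hsv hAA hBB
    have hidx : ∀ l : Fin k → ℤ, (∀ i, -(A : ℤ) ≤ l i) →
        idx D A' l = Λ.deg u + idx D A l := by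
      intro l hl
      funext i
      have t1 : -(A : ℤ) ≤ l i := hl i
      rw [Pi.add_apply, congrFun hu i]
      simp only [idx]; omega
    have hAn : ∀ i, -(A : ℤ) ≤ n i := fun i => le_trans (hA i) (hmn i)
    have hq0 : idx D A n ≤ Λ.deg (Λ.Bp hstar nu y hsv A B) :=
      Pi.le_def.mpr fun i => by
        rw [congrFun (Bp_deg hstar nu y hsv A B) i]
        have t : n i ≤ (B : ℤ) := hB i
        simp only [idx, hD]; omega
    have hq1 : idx D A n ≤ Λ.deg (Λ.comp (Λ.Bp hstar nu y hsv A B) w h2) :=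
      Pi.le_def.mpr fun i => by
        rw [Λ.deg_comp, Pi.add_apply]
        have t : idx D A n i ≤ Λ.deg (Λ.Bp hstar nu y hsv A B) i := hq0 i
        omega
    show Λ.seg (Λ.Bp hstar nu y hsv A B) (idx D A m) (idx D A n) _ _ =
      Λ.seg (Λ.Bp hstar nu y hsv A' B') (idx D A' m) (idx D A' n) _ _
    calc Λ.seg (Λ.Bp hstar nu y hsv A B) (idx D A m) (idx D A n) (idx_le_idx hmn) _
        = Λ.seg (Λ.comp (Λ.Bp hstar nu y hsv A B) w h2) (idx D A m) (idx D A n)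
            (idx_le_idx hmn) hq1 :=
          (seg_right_extend (Λ.Bp hstar nu y hsv A B) w h2 (idx D A m) (idx D A n)
            (idx_le_idx hmn) hq0 hq1).symm
      _ = Λ.seg (Λ.comp u (Λ.comp (Λ.Bp hstar nu y hsv A B) w h2) h3)
            (Λ.deg u + idx D A m) (Λ.deg u + idx D A n) (by
              exact Pi.le_def.mpr fun i => by
                have t : idx D A m i ≤ idx D A n i := idx_le_idx hmn i
                simp only [Pi.add_apply]; omega)
            (by
              exact Pi.le_def.mpr fun i => by
                rw [Λ.deg_comp, Pi.add_apply, Pi.add_apply]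
                have t : idx D A n i ≤ Λ.deg (Λ.comp (Λ.Bp hstar nu y hsv A B) w h2) i := hq1 i
                omega) :=
          (seg_left_extend u _ h3 (idx D A m) (idx D A n) (idx_le_idx hmn) hq1 _ _).symm
      _ = Λ.seg (Λ.Bp hstar nu y hsv A' B') (idx D A' m) (idx D A' n) (idx_le_idx hmn) _ :=
          seg_congr he.symm (hidx m hA).symm (hidx n hAn).symm _ _ _ _
  have b1 : ∀ i, -((max N N' : ℕ) : ℤ) ≤ m i := fun i => by
    have t1 := hNm i
    have t2 : ((N : ℕ) : ℤ) ≤ ((max N N' : ℕ) : ℤ) := by exact_mod_cast le_max_left N N'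
    omega
  have b2 : ∀ i, n i ≤ ((max M M' : ℕ) : ℤ) := fun i => by
    have t1 := hnM i
    have t2 : ((M : ℕ) : ℤ) ≤ ((max M M' : ℕ) : ℤ) := by exact_mod_cast le_max_left M M'
    omega
  calc Λ.val hstar nu y hsv N M m n hmn hnM
      = Λ.val hstar nu y hsv (max N N') (max M M') m n hmn b2 :=
        mono (le_max_left _ _) (le_max_left _ _) hNm hnM b2
    _ = Λ.val hstar nu y hsv N' M' m n hmn hnM' :=
        (mono (le_max_right _ _) (le_max_right _ _) hNm' hnM' b2).symm

variable {hstar : Λ.Star} {nu : Λ.Mor} {y : OneSidedPath Λ}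
  {hsv : Λ.src nu = y.toFun 0 0 le_rfl}

theorem val_deg (N M : ℕ) (m n : Fin k → ℤ) (hmn : m ≤ n)
    (hNm : ∀ i, -(N : ℤ) ≤ m i) (hnM : ∀ i, n i ≤ (M : ℤ)) (i : Fin k) :
    (Λ.deg (Λ.val hstar nu y hsv N M m n hmn hnM) i : ℤ) = n i - m i := by
  have h2 : idx (Λ.deg nu) N n ≤ Λ.deg (Λ.Bp hstar nu y hsv N M) :=
    Pi.le_def.mpr fun i => by
      have t : n i ≤ (M : ℤ) := hnM i
      have hd := congrFun (Bp_deg hstar nu y hsv N M) i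
      simp only [idx]; omega
  have hs := congrFun (seg_deg (Λ.Bp hstar nu y hsv N M) (idx (Λ.deg nu) N m)
    (idx (Λ.deg nu) N n) (idx_le_idx hmn) h2) i
  rw [show Λ.val hstar nu y hsv N M m n hmn hnM = Λ.seg (Λ.Bp hstar nu y hsv N M)
    (idx (Λ.deg nu) N m) (idx (Λ.deg nu) N n) (idx_le_idx hmn) h2 from rfl, hs]
  have t1 : -(N : ℤ) ≤ m i := hNm i
  have t2 : m i ≤ n i := hmn i
  simp only [Pi.sub_apply, idx]; omega

theorem val_src (N M : ℕ) (m n : Fin k → ℤ) (hmn : m ≤ n)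
    (hnM : ∀ i, n i ≤ (M : ℤ)) :
    Λ.src (Λ.val hstar nu y hsv N M m n hmn hnM) =
      Λ.val hstar nu y hsv N M n n le_rfl hnM := by
  rw [val, seg_src]
  exact seg_congr rfl rfl rfl _ _ _ _

theorem val_rng (N M : ℕ) (m n : Fin k → ℤ) (hmn : m ≤ n)
    (hnM : ∀ i, n i ≤ (M : ℤ)) (hmM : ∀ i, m i ≤ (M : ℤ)) :
    Λ.rng (Λ.val hstar nu y hsv N M m n hmn hnM) =
      Λ.val hstar nu y hsv N M m m le_rfl hmM := by
  rw [val, seg_rng]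
  exact seg_congr rfl rfl rfl _ _ _ _

theorem val_comp (N M : ℕ) (l m n : Fin k → ℤ) (h1 : l ≤ m) (h2 : m ≤ n)
    (hB : ∀ i, m i ≤ (M : ℤ)) (hB' : ∀ i, n i ≤ (M : ℤ))
    (pf : Λ.src (Λ.val hstar nu y hsv N M l m h1 hB) =
      Λ.rng (Λ.val hstar nu y hsv N M m n h2 hB')) :
    Λ.comp (Λ.val hstar nu y hsv N M l m h1 hB)
      (Λ.val hstar nu y hsv N M m n h2 hB') pf =
      Λ.val hstar nu y hsv N M l n (h1.trans h2) hB' := by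
  obtain ⟨h, hc⟩ := seg_comp (Λ.Bp hstar nu y hsv N M) (idx (Λ.deg nu) N l)
    (idx (Λ.deg nu) N m) (idx (Λ.deg nu) N n) (idx_le_idx h1) (idx_le_idx h2)
    (Pi.le_def.mpr fun i => by
      have t : n i ≤ (M : ℤ) := hB' i
      have hd := congrFun (Bp_deg hstar nu y hsv N M) i
      simp only [idx]; omega)
  exact hc

/-- Canonical left bound. -/
def Ncan (m : Fin k → ℤ) : ℕ := Finset.univ.sup fun i => (-(m i)).toNat

theorem Ncan_le (m : Fin k → ℤ) : ∀ i, -((Ncan m : ℕ) : ℤ) ≤ m i := fun i => by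
  have t : (-(m i)).toNat ≤ Ncan m := Finset.le_sup (f := fun j => (-(m j)).toNat) (Finset.mem_univ i)
  omega

/-- Canonical right bound. -/
def Mcan (n : Fin k → ℤ) : ℕ := Finset.univ.sup fun i => (n i).toNat

theorem Mcan_le (n : Fin k → ℤ) : ∀ i, n i ≤ ((Mcan n : ℕ) : ℤ) := fun i => by
  have t : (n i).toNat ≤ Mcan n := Finset.le_sup (f := fun j => (n j).toNat) (Finset.mem_univ i)
  omega

/-- The canonical two-sided extension of a one-sided path, with the
interval `[-d(ν), 0]` prescribed to be `ν`. -/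
noncomputable def extP (Λ : KGraph k) (hstar : Λ.Star) (nu : Λ.Mor)
    (y : OneSidedPath Λ) (hsv : Λ.src nu = y.toFun 0 0 le_rfl) :
    TwoSidedPath Λ where
  toFun m n h := Λ.val hstar nu y hsv (Ncan m) (Mcan n) m n h (Mcan_le n)
  deg_eq m n h i := val_deg _ _ m n h (Ncan_le m) (Mcan_le n) i
  src_eq m n h := by
    rw [val_src]
    exact val_invar hstar nu y hsv n n le_rfl
      (fun i => le_trans (Ncan_le m i) (h i)) (Mcan_le n) (Ncan_le n) (Mcan_le n)
  rng_eq m n h := by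
    rw [val_rng _ _ _ _ _ _ (fun i => le_trans (h i) (Mcan_le n i))]
    exact val_invar hstar nu y hsv m m le_rfl
      (Ncan_le m) (fun i => le_trans (h i) (Mcan_le n i)) (Ncan_le m) (Mcan_le m)
  comp_eq l m n h1 h2 := by
    have e1 : Λ.val hstar nu y hsv (Ncan l) (Mcan m) l m h1 (Mcan_le m) =
        Λ.val hstar nu y hsv (Ncan l) (Mcan n) l m h1
          (fun i => le_trans (h2 i) (Mcan_le n i)) :=
      val_invar hstar nu y hsv l m h1 (Ncan_le l) (Mcan_le m) (Ncan_le l)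
        (fun i => le_trans (h2 i) (Mcan_le n i))
    have e2 : Λ.val hstar nu y hsv (Ncan m) (Mcan n) m n h2 (Mcan_le n) =
        Λ.val hstar nu y hsv (Ncan l) (Mcan n) m n h2 (Mcan_le n) :=
      val_invar hstar nu y hsv m n h2
        (fun i => le_trans (Ncan_le m i) le_rfl) (Mcan_le n)
        (fun i => le_trans (Ncan_le l i) (h1 i)) (Mcan_le n)
    have pf : Λ.src (Λ.val hstar nu y hsv (Ncan l) (Mcan n) l m h1
          (fun i => le_trans (h2 i) (Mcan_le n i))) =
        Λ.rng (Λ.val hstar nu y hsv (Ncan l) (Mcan n) m n h2 (Mcan_le n)) := by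
      rw [val_src, val_rng _ _ _ _ _ _ (fun i => le_trans (h2 i) (Mcan_le n i))]
    calc Λ.comp (Λ.val hstar nu y hsv (Ncan l) (Mcan m) l m h1 (Mcan_le m))
          (Λ.val hstar nu y hsv (Ncan m) (Mcan n) m n h2 (Mcan_le n)) _
        = Λ.comp (Λ.val hstar nu y hsv (Ncan l) (Mcan n) l m h1
            (fun i => le_trans (h2 i) (Mcan_le n i)))
          (Λ.val hstar nu y hsv (Ncan l) (Mcan n) m n h2 (Mcan_le n)) pf :=
          comp_congr e1 e2 _ _
      _ = Λ.val hstar nu y hsv (Ncan l) (Mcan n) l n (h1.trans h2) (Mcan_le n) :=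
          val_comp _ _ l m n h1 h2 _ _ pf
      _ = Λ.val hstar nu y hsv (Ncan l) (Mcan n) l n (h1.trans h2) (Mcan_le n) := rfl

theorem Lc_zero : Λ.Lc hstar nu 0 = nu := rfl

theorem val_zero (M : ℕ) (m n : Fin k → ℕ) (hmn : coeZ m ≤ coeZ n)
    (hnM : ∀ i, coeZ n i ≤ (M : ℤ)) (hmn' : m ≤ n) :
    Λ.val hstar nu y hsv 0 M (coeZ m) (coeZ n) hmn hnM = y.toFun m n hmn' := by
  have hBp : Λ.Bp hstar nu y hsv 0 M =
      Λ.comp nu (y.toFun 0 (fun _ => M) (zero_le_pi _))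
        (hsv.trans (y.rng_eq 0 _ _).symm) := rfl
  have hnM1 : n ≤ (fun _ => M : Fin k → ℕ) := Pi.le_def.mpr fun i => by
    have := hnM i; simp only [coeZ] at this; omega
  have hle2 : n ≤ Λ.deg (y.toFun 0 (fun _ => M) (zero_le_pi _)) := by
    rw [y.deg_toFun, sub_zero_pi]; exact hnM1
  have hadd : Λ.deg nu + m ≤ Λ.deg nu + n := Pi.le_def.mpr fun i => by
    have t : m i ≤ n i := hmn' i
    simp only [Pi.add_apply]; omega
  have hle2' : Λ.deg nu + n ≤ Λ.deg (Λ.Bp hstar nu y hsv 0 M) :=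
    Pi.le_def.mpr fun i => by
      have hd := congrFun (Bp_deg hstar nu y hsv 0 M) i
      have t : n i ≤ M := hnM1 i
      rw [hd]; simp only [Pi.add_apply]; omega
  have hle2'' : Λ.deg nu + n ≤ Λ.deg (Λ.comp nu (y.toFun 0 (fun _ => M)
      (zero_le_pi _)) (hsv.trans (y.rng_eq 0 _ _).symm)) := by
    rw [← hBp]; exact hle2'
  calc Λ.val hstar nu y hsv 0 M (coeZ m) (coeZ n) hmn hnM
      = Λ.seg (Λ.Bp hstar nu y hsv 0 M) (Λ.deg nu + m) (Λ.deg nu + n)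
          hadd hle2' := by
        refine seg_congr rfl ?_ ?_ _ _ _ _
        · funext i; simp only [idx, coeZ, Pi.add_apply]; omega
        · funext i; simp only [idx, coeZ, Pi.add_apply]; omega
    _ = Λ.seg (Λ.comp nu (y.toFun 0 (fun _ => M) (zero_le_pi _))
          (hsv.trans (y.rng_eq 0 _ _).symm)) (Λ.deg nu + m) (Λ.deg nu + n)
          hadd hle2'' := seg_congr hBp rfl rfl _ _ _ _
    _ = Λ.seg (y.toFun 0 (fun _ => M) (zero_le_pi _)) m n hmn' hle2 :=
        seg_left_extend nu _ _ m n hmn' hle2 hadd hle2''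
    _ = y.toFun m n hmn' := seg_onesided y _ m n hmn' hnM1 _ _

theorem restrict_extP :
    (Λ.extP hstar nu y hsv).restrict = y := by
  refine OneSidedPath.ext' fun m n h => ?_
  show Λ.val hstar nu y hsv (Ncan (coeZ m)) (Mcan (coeZ n)) (coeZ m) (coeZ n)
    (coeZ_le_coeZ h) (Mcan_le (coeZ n)) = y.toFun m n h
  rw [val_invar hstar nu y hsv (coeZ m) (coeZ n) (coeZ_le_coeZ h)
    (Ncan_le (coeZ m)) (Mcan_le (coeZ n))
    (fun i => by simp only [coeZ]; omega) (Mcan_le (coeZ n))]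
  exact val_zero (Mcan (coeZ n)) m n (coeZ_le_coeZ h) (Mcan_le (coeZ n)) h

theorem val_nu (N M : ℕ) (hmn : -(coeZ (Λ.deg nu)) ≤ 0)
    (hnM : ∀ i, (0 : Fin k → ℤ) i ≤ (M : ℤ)) :
    Λ.val hstar nu y hsv N M (-(coeZ (Λ.deg nu))) 0 hmn hnM = nu := by
  obtain ⟨u, hu, hh, he⟩ := Lc_extend hstar nu 0 N
  have heN : Λ.Lc hstar nu N = Λ.comp u nu hh := by
    rw [Nat.zero_add] at he; exact he
  have hq1 : (fun i => Λ.deg u i + Λ.deg nu i) ≤ Λ.deg (Λ.comp u nu hh) :=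
    Pi.le_def.mpr fun i => by
      have e := congrFun (Λ.deg_comp u nu hh) i; simp only [Pi.add_apply] at e; omega
  have hqL : (fun i => Λ.deg nu i + N) ≤ Λ.deg (Λ.Lc hstar nu N) :=
    Pi.le_def.mpr fun i => by
      rw [congrFun (Lc_deg hstar nu N) i]
  have hqB : (fun i => Λ.deg nu i + N) ≤ Λ.deg (Λ.Bp hstar nu y hsv N M) :=
    Pi.le_def.mpr fun i => by
      rw [congrFun (Bp_deg hstar nu y hsv N M) i]; omega
  have h1N : (fun _ => N : Fin k → ℕ) ≤ fun i => Λ.deg nu i + N :=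
    Pi.le_def.mpr fun i => by omega
  calc Λ.val hstar nu y hsv N M (-(coeZ (Λ.deg nu))) 0 hmn hnM
      = Λ.seg (Λ.Bp hstar nu y hsv N M) (fun _ => N) (fun i => Λ.deg nu i + N)
          h1N hqB := by
        refine seg_congr rfl ?_ ?_ _ _ _ _
        · funext i; simp only [idx, coeZ, Pi.neg_apply]; omega
        · funext i; simp only [idx, Pi.zero_apply]; omega
    _ = Λ.seg (Λ.Lc hstar nu N) (fun _ => N) (fun i => Λ.deg nu i + N) h1N hqL :=
        seg_right_extend (Λ.Lc hstar nu N) _ _ _ _ h1N hqL hqB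
    _ = Λ.seg (Λ.comp u nu hh) (fun i => Λ.deg u i + (0 : Fin k → ℕ) i)
          (fun i => Λ.deg u i + Λ.deg nu i)
          (Pi.le_def.mpr fun i => by simp only [Pi.zero_apply]; omega) hq1 := by
        refine seg_congr heN ?_ ?_ _ _ _ _
        · funext i; rw [congrFun hu i]; simp only [Pi.zero_apply]; omega
        · funext i; rw [congrFun hu i]; omega
    _ = Λ.seg nu 0 (Λ.deg nu) (zero_le_pi _) le_rfl := by
        have := seg_left_extend u nu hh 0 (Λ.deg nu) (zero_le_pi _) le_rfl
          (Pi.le_def.mpr fun i => by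
            simp only [Pi.add_apply, Pi.zero_apply]
            have t : (0 : Fin k → ℕ) i ≤ Λ.deg nu i := Nat.zero_le _
            omega)
          (le_of_eq (Λ.deg_comp u nu hh).symm)
        rw [← this]
        exact seg_congr rfl rfl rfl _ _ _ _
    _ = nu := seg_full nu _ _

theorem extP_nu (hmn : -(coeZ (Λ.deg nu)) ≤ 0) :
    (Λ.extP hstar nu y hsv).toFun (-(coeZ (Λ.deg nu))) 0 hmn = nu :=
  val_nu _ _ hmn (Mcan_le 0)

end KGraph

namespace TwoSidedPath
variable {k : ℕ} {Λ : KGraph k}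

theorem deg_toFun_eq (x z : TwoSidedPath Λ) (p q : Fin k → ℤ) (h : p ≤ q) :
    Λ.deg (z.toFun p q h) = Λ.deg (x.toFun p q h) := by
  funext i
  have t1 := z.deg_eq p q h i
  have t2 := x.deg_eq p q h i
  omega

theorem agree_sub {x z : TwoSidedPath Λ} {a b m n : Fin k → ℤ}
    (ham : a ≤ m) (hmn : m ≤ n) (hnb : n ≤ b) (hab : a ≤ b)
    (hag : z.toFun a b hab = x.toFun a b hab) :
    z.toFun m n hmn = x.toFun m n hmn := by
  have hmb : m ≤ b := hmn.trans hnb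
  have e1z := z.comp_eq a m b ham hmb
  have e1x := x.comp_eq a m b ham hmb
  have hag' : z.toFun a b (ham.trans hmb) = x.toFun a b (ham.trans hmb) := hag
  have h1 := KGraph.comp_inj _ _ (deg_toFun_eq x z a m ham)
    ((e1z.trans hag').trans e1x.symm)
  have e2z := z.comp_eq m n b hmn hnb
  have e2x := x.comp_eq m n b hmn hnb
  have h2 := KGraph.comp_inj _ _ (deg_toFun_eq x z m n hmn)
    ((e2z.trans h1.2).trans e2x.symm)
  exact h2.1

end TwoSidedPath

theorem coeZ_zero {k : ℕ} : coeZ (0 : Fin k → ℕ) = 0 := by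
  funext i; simp [coeZ]

theorem restrict_preimage_OCyl {k : ℕ} (Λ : KGraph k) (lam : Λ.Mor) :
    TwoSidedPath.restrict ⁻¹' (OCyl Λ lam) = ZCyl Λ lam 0 := by
  ext x
  show x.toFun (coeZ 0) (coeZ (Λ.deg lam)) _ = lam ↔
    x.toFun 0 (0 + Λ.degZ lam) _ = lam
  have e : x.toFun (coeZ 0) (coeZ (Λ.deg lam)) (coeZ_le_coeZ (KGraph.zero_le_pi _)) =
      x.toFun 0 (0 + Λ.degZ lam) (le_add_degZ Λ 0 lam) := by
    refine x.toFun_congr coeZ_zero ?_ _ _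
    funext i; simp [coeZ, KGraph.degZ]
  rw [e]

/-- The shift-intertwining property. -/
theorem restrict_shift {k : ℕ} {Λ : KGraph k} (p : Fin k → ℕ) (x : TwoSidedPath Λ) :
    (TwoSidedPath.shift (coeZ p) x).restrict = OneSidedPath.shift p x.restrict := by
  refine OneSidedPath.ext' fun m n h => ?_
  show x.toFun (coeZ m + coeZ p) (coeZ n + coeZ p) _ =
    x.toFun (coeZ (m + p)) (coeZ (n + p)) _
  refine x.toFun_congr ?_ ?_ _ _
  · funext i; simp [coeZ, Pi.add_apply]
  · funext i; simp [coeZ, Pi.add_apply]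

/-- Uniform bound for a finite family of cylinder sets. -/
theorem exists_cyl_bound {k : ℕ} {Λ : KGraph k}
    {f : Set (Set (TwoSidedPath Λ))} (hf : f.Finite)
    (hsub : f ⊆ {S | ∃ lam nn, S = ZCyl Λ lam nn}) :
    ∃ N : ℕ, ∀ S ∈ f, ∃ lam nn, S = ZCyl Λ lam nn ∧
      ∀ i, -(N : ℤ) ≤ nn i ∧ nn i + Λ.deg lam i ≤ (N : ℤ) := by
  classical
  set g : Set (TwoSidedPath Λ) → ℕ := fun S =>
    if hS : ∃ lam nn, S = ZCyl Λ lam nn then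
      Finset.univ.sup fun i =>
        max (-(hS.choose_spec.choose i)).toNat
          (hS.choose_spec.choose i + Λ.deg hS.choose i).toNat
    else 0 with hg
  refine ⟨hf.toFinset.sup g, fun S hS => ?_⟩
  have hex : ∃ lam nn, S = ZCyl Λ lam nn := hsub hS
  refine ⟨hex.choose, hex.choose_spec.choose, hex.choose_spec.choose_spec, fun i => ?_⟩
  have hgS : g S ≤ hf.toFinset.sup g := Finset.le_sup (hf.mem_toFinset.mpr hS)
  have hgval : g S = Finset.univ.sup fun i =>
      max (-(hex.choose_spec.choose i)).toNat
        (hex.choose_spec.choose i + Λ.deg hex.choose i).toNat := by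
    rw [hg]; exact dif_pos hex
  have hi : max (-(hex.choose_spec.choose i)).toNat
      (hex.choose_spec.choose i + Λ.deg hex.choose i).toNat ≤ g S := by
    rw [hgval]
    exact Finset.le_sup (f := fun i =>
      max (-(hex.choose_spec.choose i)).toNat
        (hex.choose_spec.choose i + Λ.deg hex.choose i).toNat) (Finset.mem_univ i)
  have := le_trans hi hgS
  omega


theorem restrict_continuous_open_surjective' {k : ℕ} (hk : 0 < k)
    (Λ : KGraph k) (hstar : Λ.Star) :
    Continuous (TwoSidedPath.restrict : TwoSidedPath Λ → OneSidedPath Λ) ∧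
    IsOpenMap (TwoSidedPath.restrict : TwoSidedPath Λ → OneSidedPath Λ) ∧
    Function.Surjective (TwoSidedPath.restrict : TwoSidedPath Λ → OneSidedPath Λ) ∧
    (∀ (p : Fin k → ℕ) (x : TwoSidedPath Λ),
      (TwoSidedPath.shift (coeZ p) x).restrict =
        OneSidedPath.shift p x.restrict) := by
  refine ⟨?_, ?_, ?_, restrict_shift⟩
  · -- continuity
    refine continuous_generateFrom_iff.mpr ?_
    rintro S ⟨lam, rfl⟩
    rw [restrict_preimage_OCyl]
    exact TopologicalSpace.isOpen_generateFrom_of_mem ⟨lam, 0, rfl⟩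
  · -- openness
    intro U hU
    rw [isOpen_iff_forall_mem_open]
    rintro _ ⟨x, hxU, rfl⟩
    have hbasis := TopologicalSpace.isTopologicalBasis_of_subbasis
      (s := {S | ∃ lam nn, S = ZCyl Λ lam nn}) rfl
    obtain ⟨B, hBmem, hxB, hBU⟩ := hbasis.exists_subset_of_mem_open hxU hU
    obtain ⟨f, ⟨hffin, hfsub⟩, rfl⟩ := hBmem
    obtain ⟨N, hN⟩ := exists_cyl_bound hffin hfsub
    have hP0 : -(fun _ => (N : ℤ) : Fin k → ℤ) ≤ (0 : Fin k → ℤ) :=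
      Pi.le_def.mpr fun i => by simp
    have h0P : (0 : Fin k → ℤ) ≤ (fun _ => (N : ℤ) : Fin k → ℤ) :=
      Pi.le_def.mpr fun i => by simp
    have hmP : -(fun _ => (N : ℤ) : Fin k → ℤ) ≤ (fun _ => (N : ℤ) : Fin k → ℤ) :=
      hP0.trans h0P
    set nu : Λ.Mor := x.toFun (-(fun _ => (N : ℤ))) 0 hP0 with hnu
    set mu : Λ.Mor := x.restrict.toFun 0 (fun _ => N) (KGraph.zero_le_pi _) with hmu
    have hdegmu : Λ.deg mu = fun _ => N := by
      rw [hmu, OneSidedPath.deg_toFun, KGraph.sub_zero_pi]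
    have hdegnu : coeZ (Λ.deg nu) = fun _ => (N : ℤ) := by
      funext i
      have hd := x.deg_eq (-(fun _ => (N : ℤ))) 0 hP0 i
      simp only [Pi.zero_apply, Pi.neg_apply] at hd
      simp only [coeZ, hnu]; omega
    have hvert : x.restrict.toFun 0 0 le_rfl = x.toFun 0 0 le_rfl :=
      x.toFun_congr coeZ_zero coeZ_zero _ _
    refine ⟨OCyl Λ mu, ?_, TopologicalSpace.isOpen_generateFrom_of_mem ⟨mu, rfl⟩, ?_⟩
    · -- OCyl mu ⊆ restrict '' U
      rintro y hy
      have hy' : y.toFun 0 (Λ.deg mu) (KGraph.zero_le_pi _) = mu := hy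
      have hsv : Λ.src nu = y.toFun 0 0 le_rfl := by
        calc Λ.src nu = x.toFun 0 0 le_rfl := x.src_eq _ _ hP0
          _ = x.restrict.toFun 0 0 le_rfl := hvert.symm
          _ = Λ.rng mu := (x.restrict.rng_eq 0 (fun _ => N) (KGraph.zero_le_pi _)).symm
          _ = Λ.rng (y.toFun 0 (Λ.deg mu) (KGraph.zero_le_pi _)) := by rw [hy']
          _ = y.toFun 0 0 le_rfl := y.rng_eq 0 (Λ.deg mu) (KGraph.zero_le_pi _)
      have hzy : (Λ.extP hstar nu y hsv).restrict = y := KGraph.restrict_extP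
      refine ⟨Λ.extP hstar nu y hsv, hBU ?_, hzy⟩
      -- z agrees with x on [-P, P]
      have c1 : (Λ.extP hstar nu y hsv).toFun (-(fun _ => (N : ℤ))) 0 hP0 = nu := by
        calc (Λ.extP hstar nu y hsv).toFun (-(fun _ => (N : ℤ))) 0 hP0
            = (Λ.extP hstar nu y hsv).toFun (-(coeZ (Λ.deg nu))) 0
              (by rw [hdegnu]; exact hP0) :=
              TwoSidedPath.toFun_congr _ (by rw [hdegnu]) rfl _ _
          _ = nu := KGraph.extP_nu _
      have c2 : (Λ.extP hstar nu y hsv).toFun 0 (fun _ => (N : ℤ)) h0P =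
          x.toFun 0 (fun _ => (N : ℤ)) h0P := by
        have e1 : (Λ.extP hstar nu y hsv).toFun (coeZ 0) (coeZ (Λ.deg mu))
            (coeZ_le_coeZ (KGraph.zero_le_pi _)) = mu := by
          have : (Λ.extP hstar nu y hsv).restrict.toFun 0 (Λ.deg mu)
              (KGraph.zero_le_pi _) = mu := by rw [hzy]; exact hy'
          exact this
        have e2 : x.toFun (coeZ 0) (coeZ (fun _ => N))
            (coeZ_le_coeZ (KGraph.zero_le_pi _)) = mu := rfl
        have hc0 : (coeZ (0 : Fin k → ℕ)) = (0 : Fin k → ℤ) := coeZ_zero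
        have hcd : coeZ (Λ.deg mu) = fun _ => (N : ℤ) := by
          rw [hdegmu]; funext i; simp [coeZ]
        have hcN : coeZ (fun _ => N : Fin k → ℕ) = fun _ => (N : ℤ) := by
          funext i; simp [coeZ]
        calc (Λ.extP hstar nu y hsv).toFun 0 (fun _ => (N : ℤ)) h0P
            = (Λ.extP hstar nu y hsv).toFun (coeZ 0) (coeZ (Λ.deg mu))
              (coeZ_le_coeZ (KGraph.zero_le_pi _)) :=
              TwoSidedPath.toFun_congr _ hc0.symm hcd.symm _ _
          _ = mu := e1
          _ = x.toFun (coeZ 0) (coeZ (fun _ => N)) (coeZ_le_coeZ (KGraph.zero_le_pi _)) :=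
              e2.symm
          _ = x.toFun 0 (fun _ => (N : ℤ)) h0P :=
              TwoSidedPath.toFun_congr _ hc0 hcN _ _
      have hzx : (Λ.extP hstar nu y hsv).toFun (-(fun _ => (N : ℤ)))
          (fun _ => (N : ℤ)) hmP = x.toFun (-(fun _ => (N : ℤ))) (fun _ => (N : ℤ)) hmP := by
        have ez := (Λ.extP hstar nu y hsv).comp_eq (-(fun _ => (N : ℤ))) 0
          (fun _ => (N : ℤ)) hP0 h0P
        have ex := x.comp_eq (-(fun _ => (N : ℤ))) 0 (fun _ => (N : ℤ)) hP0 h0P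
        calc (Λ.extP hstar nu y hsv).toFun (-(fun _ => (N : ℤ))) (fun _ => (N : ℤ)) hmP
            = Λ.comp ((Λ.extP hstar nu y hsv).toFun (-(fun _ => (N : ℤ))) 0 hP0)
                ((Λ.extP hstar nu y hsv).toFun 0 (fun _ => (N : ℤ)) h0P) _ := ez.symm
          _ = Λ.comp (x.toFun (-(fun _ => (N : ℤ))) 0 hP0)
                (x.toFun 0 (fun _ => (N : ℤ)) h0P) _ :=
              KGraph.comp_congr (c1.trans hnu) c2 _ _
          _ = x.toFun (-(fun _ => (N : ℤ))) (fun _ => (N : ℤ)) hmP := ex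
      refine Set.mem_sInter.mpr fun S hSf => ?_
      obtain ⟨lam, nn, rfl, hbound⟩ := hN S hSf
      have hxS : x.toFun nn (nn + Λ.degZ lam) (le_add_degZ Λ nn lam) = lam :=
        hxB _ hSf
      have b1 : -(fun _ => (N : ℤ) : Fin k → ℤ) ≤ nn :=
        Pi.le_def.mpr fun i => by
          have := (hbound i).1
          simp only [Pi.neg_apply]; omega
      have b2 : nn + Λ.degZ lam ≤ (fun _ => (N : ℤ) : Fin k → ℤ) :=
        Pi.le_def.mpr fun i => by
          have := (hbound i).2
          simp only [Pi.add_apply, KGraph.degZ]; omega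
      show (Λ.extP hstar nu y hsv).toFun nn (nn + Λ.degZ lam) _ = lam
      exact (TwoSidedPath.agree_sub b1 (le_add_degZ Λ nn lam) b2 hmP hzx).trans hxS
    · -- x.restrict ∈ OCyl mu
      show x.restrict.toFun 0 (Λ.deg mu) (KGraph.zero_le_pi _) = mu
      rw [hmu]
      exact OneSidedPath.toFun_congr _ rfl (by rw [← hmu, hdegmu]) _ _
  · -- surjectivity
    intro y
    exact ⟨Λ.extP hstar (y.toFun 0 0 le_rfl) y (y.src_eq 0 0 le_rfl),
      KGraph.restrict_extP⟩

/-- The restriction map `π : Λ^Δ → Λ^Ω` is a continuous open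
surjection intertwining the shifts: `π ∘ σ^p = σ^p ∘ π` for `p ∈ ℕ^k`. -/
theorem restrict_continuous_open_surjective {k : ℕ} (hk : 0 < k)
    (Λ : KGraph k) (hstar : Λ.Star) :
    Continuous (TwoSidedPath.restrict : TwoSidedPath Λ → OneSidedPath Λ) ∧
    IsOpenMap (TwoSidedPath.restrict : TwoSidedPath Λ → OneSidedPath Λ) ∧
    Function.Surjective (TwoSidedPath.restrict : TwoSidedPath Λ → OneSidedPath Λ) ∧
    (∀ (p : Fin k → ℕ) (x : TwoSidedPath Λ),
      (TwoSidedPath.shift (coeZ p) x).restrict =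
        OneSidedPath.shift p x.restrict) := by
  exact restrict_continuous_open_surjective' hk Λ hstar
end

section
/- Let (Λ,d) be a k-graph satisfying the standing assumption (★). If Λ is primitive, then Λ⁰ is finite, and there exists N ∈ ℕ^k such that for all p ∈ ℕ^k with p ≥ N and every u,v ∈ Λ⁰ there exists λ ∈ Λ^p with r(λ) = u and s(λ) = v. -/
open scoped Classical
open TopologicalSpace MeasureTheory

/-- A primitive `k`-graph satisfying (★) has finitely many
vertices, and there is `N ∈ ℕ^k` such that for all `p ≥ N` and all vertices
`u, v` there is `λ ∈ Λ^p` with `r(λ) = u` and `s(λ) = v`. -/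
theorem primitive_consequences {k : ℕ} (hk : 0 < k) (Λ : KGraph k)
    (hstar : Λ.Star) (hprim : Λ.Primitive) :
    {v : Λ.Mor | Λ.IsVertex v}.Finite ∧
    ∃ N : Fin k → ℕ, ∀ p : Fin k → ℕ, N ≤ p →
      ∀ u v, Λ.IsVertex u → Λ.IsVertex v →
        ∃ lam, Λ.deg lam = p ∧ Λ.rng lam = u ∧ Λ.src lam = v := by
  obtain ⟨p, hp0, hp⟩ := hprim
  constructor
  · by_cases hne : ∃ u, Λ.IsVertex u
    · obtain ⟨u, hu⟩ := hne
      have hfin := ((hstar p).2 u hu).1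
      have hsub : {v : Λ.Mor | Λ.IsVertex v} ⊆
          Λ.src '' {lam | Λ.deg lam = p ∧ Λ.rng lam = u} := by
        intro v hv
        obtain ⟨lam, hd, hr, hs⟩ := hp u v hu hv
        exact ⟨lam, ⟨hd, hr⟩, hs⟩
      exact (hfin.image _).subset hsub
    · have : {v : Λ.Mor | Λ.IsVertex v} = ∅ := by
        ext v; simp only [Set.mem_setOf_eq, Set.mem_empty_iff_false, iff_false]
        exact fun h => hne ⟨v, h⟩
      rw [this]; exact Set.finite_empty
  · refine ⟨p, fun q hq u v hu hv => ?_⟩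
    obtain ⟨mu, hmud, hmus⟩ := ((hstar (q - p)).1 v hv).2
    have hmur : Λ.IsVertex (Λ.rng mu) := Λ.deg_rng mu
    obtain ⟨lam, hld, hlr, hls⟩ := hp u (Λ.rng mu) hu hmur
    have hcomp : Λ.src lam = Λ.rng mu := hls
    refine ⟨Λ.comp lam mu hcomp, ?_, ?_, ?_⟩
    · rw [Λ.deg_comp, hld, hmud]
      funext i
      have hqi : p i ≤ q i := hq i
      simp only [Pi.add_apply, Pi.sub_apply]
      omega
    · rw [Λ.rng_comp]; exact hlr
    · rw [Λ.src_comp]; exact hmus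
end
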